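/- arXiv:math/0502019 — 10 statements merged into one kernel-verified Lean document; each statement's English description precedes it below -/
import Mathlib

section
/- Let q be a real number with 0 < q < 1 and let x be any real number. Then for every integer n ≥ 0, the q-Bernoulli polynomial satisfies the addition formula β_n(x:q) = Σ_{l=0}^{n} C(n,l) · q^{l·x} · β_l(q) · [x]_q^{n−l}, where C(n,l) is the binomial coefficient. -/
open Finset

/-- The q-analogue `[z]_q = (1 - q^z)/(1 - q)` for a real exponent `z`. -/
noncomputable def qn (q z : ℝ) : ℝ := (1 - q ^ z) / (1 - q)

lemma qn_split (q x : ℝ) (hq0 : 0 < q) (m : ℝ) :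
    qn q (m + x) = qn q x + q ^ x * qn q m := by
  unfold qn
  rw [Real.rpow_add hq0]
  ring

set_option maxHeartbeats 1000000 in
lemma summable_aux (q x : ℝ) (hq0 : 0 < q) (hq1 : q < 1) (l : ℕ) :
    Summable (fun m : ℕ => q ^ ((m : ℝ) + x) * qn q ((m : ℝ) + x) ^ l) := by
  have h1 : (0:ℝ) < 1 - q := by linarith
  have hx : 0 < q ^ x := Real.rpow_pos_of_pos hq0 x
  apply Summable.of_norm
  refine Summable.of_nonneg_of_le (f := fun m : ℕ => (q ^ x * ((1 + q ^ x) / (1 - q)) ^ l) * q ^ m)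
    (fun m => norm_nonneg _) ?_ ((summable_geometric_of_lt_one hq0.le hq1).mul_left _)
  · intro m
    have hqm : q ^ (m:ℝ) ≤ 1 := by
      rw [Real.rpow_natCast]; exact pow_le_one₀ hq0.le hq1.le
    have hqmpos : 0 < q ^ (m:ℝ) := Real.rpow_pos_of_pos hq0 _
    have hmx : q ^ ((m:ℝ) + x) = q ^ (m:ℝ) * q ^ x := Real.rpow_add hq0 _ _
    have hmxpos : 0 < q ^ ((m:ℝ)+x) := Real.rpow_pos_of_pos hq0 _
    have hmxle : q ^ ((m:ℝ)+x) ≤ q ^ x := by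
      rw [hmx]; nlinarith
    have habs : |qn q ((m:ℝ)+x)| ≤ (1 + q^x)/(1-q) := by
      unfold qn
      rw [abs_div, abs_of_pos h1]
      gcongr
      rw [abs_le]
      constructor <;> linarith
    calc ‖q ^ ((m:ℝ)+x) * qn q ((m:ℝ)+x) ^ l‖
        = q ^ ((m:ℝ)+x) * |qn q ((m:ℝ)+x)| ^ l := by
          rw [norm_mul, norm_pow, Real.norm_eq_abs, Real.norm_eq_abs, abs_of_pos hmxpos]
      _ ≤ q ^ ((m:ℝ)+x) * ((1 + q ^ x) / (1 - q)) ^ l := by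
          gcongr
      _ = (q ^ x * ((1 + q ^ x) / (1 - q)) ^ l) * q ^ m := by
          rw [hmx, Real.rpow_natCast]; ring

lemma rpow_fact (q x : ℝ) (hq0 : 0 < q) (l : ℕ) :
    (q ^ x) ^ l = q ^ (x * (l:ℝ)) := by
  rw [← Real.rpow_natCast (q ^ x) l, ← Real.rpow_mul hq0.le]

lemma tsum_expand (q x : ℝ) (hq0 : 0 < q) (hq1 : q < 1) (n : ℕ) :
    (∑' m : ℕ, q ^ ((m : ℝ) + x) * qn q ((m : ℝ) + x) ^ n)
      = ∑ l ∈ range (n+1), ((n.choose l : ℝ) * q ^ (((l:ℝ)+1) * x) * qn q x ^ (n - l))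
          * ∑' m : ℕ, q ^ (m : ℝ) * qn q (m : ℝ) ^ l := by
  have h0 : ∀ l : ℕ, Summable (fun m : ℕ => q ^ (m:ℝ) * qn q (m:ℝ) ^ l) := by
    intro l; simpa using summable_aux q 0 hq0 hq1 l
  have key : ∀ m : ℕ, q ^ ((m:ℝ) + x) * qn q ((m:ℝ) + x) ^ n
      = ∑ l ∈ range (n+1), ((n.choose l : ℝ) * q ^ (((l:ℝ)+1) * x) * qn q x ^ (n - l))
          * (q ^ (m:ℝ) * qn q (m:ℝ) ^ l) := by
    intro m
    rw [qn_split q x hq0 (m:ℝ), add_comm (qn q x), add_pow, Finset.mul_sum]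
    refine Finset.sum_congr rfl fun l hl => ?_
    have e1 : q ^ ((m:ℝ)+x) = q^(m:ℝ) * q^x := Real.rpow_add hq0 _ _
    have e2 : (q ^ x * qn q (m:ℝ)) ^ l = q ^ (x*(l:ℝ)) * qn q (m:ℝ) ^ l := by
      rw [mul_pow, rpow_fact q x hq0 l]
    have e3 : q ^ (((l:ℝ)+1)*x) = q ^ (x*(l:ℝ)) * q ^ x := by
      rw [← Real.rpow_add hq0]; ring_nf
    rw [e1, e2, e3]
    ring
  calc (∑' m : ℕ, q ^ ((m : ℝ) + x) * qn q ((m : ℝ) + x) ^ n)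
      = ∑' m : ℕ, ∑ l ∈ range (n+1),
          ((n.choose l : ℝ) * q ^ (((l:ℝ)+1) * x) * qn q x ^ (n - l))
          * (q ^ (m:ℝ) * qn q (m:ℝ) ^ l) := tsum_congr key
    _ = ∑ l ∈ range (n+1), ∑' m : ℕ,
          ((n.choose l : ℝ) * q ^ (((l:ℝ)+1) * x) * qn q x ^ (n - l))
          * (q ^ (m:ℝ) * qn q (m:ℝ) ^ l) := Summable.tsum_finsetSum (fun l _ => (h0 l).mul_left _)
    _ = _ := by
        refine Finset.sum_congr rfl fun l hl => ?_
        rw [tsum_mul_left]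

/-- The q-Bernoulli polynomial `β_n(x:q)`:
`β_0(x:q) = (q-1)/log q` and, for `n ≥ 1`,
`β_n(x:q) = ((q-1)/log q)·(1-q)^{-n} - n·Σ_{m≥0} q^{m+x}·[m+x]_q^{n-1}`. -/
noncomputable def qB (q x : ℝ) : ℕ → ℝ
  | 0 => (q - 1) / Real.log q
  | n + 1 => (q - 1) / Real.log q * ((1 - q) ^ (n + 1))⁻¹
      - ((n : ℝ) + 1) * ∑' m : ℕ, q ^ ((m : ℝ) + x) * qn q ((m : ℝ) + x) ^ n

/-- Addition formula for the q-Bernoulli polynomials: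
`β_n(x:q) = Σ_{l=0}^{n} C(n,l) · q^{l·x} · β_l(q) · [x]_q^{n-l}`. -/
theorem qB_addition_formula (q x : ℝ) (hq0 : 0 < q) (hq1 : q < 1) (n : ℕ) :
    qB q x n = ∑ l ∈ range (n + 1),
      (n.choose l : ℝ) * q ^ ((l : ℝ) * x) * qB q 0 l * qn q x ^ (n - l) := by
  have h1 : (0:ℝ) < 1 - q := by linarith
  set c : ℝ := (q - 1) / Real.log q with hc
  cases n with
  | zero =>
    simp [qB, Real.rpow_zero]
  | succ n =>
    set T : ℕ → ℝ := fun l => ∑' m : ℕ, q ^ (m:ℝ) * qn q (m:ℝ) ^ l with hTdef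
    have hT : ∀ l : ℕ, ((l:ℝ)+1) * T l = c * ((1-q)^(l+1))⁻¹ - qB q 0 (l+1) := by
      intro l
      have h : qB q 0 (l+1) = c * ((1-q)^(l+1))⁻¹
          - ((l:ℝ)+1) * ∑' m : ℕ, q ^ ((m:ℝ)+0) * qn q ((m:ℝ)+0) ^ l := rfl
      simp only [add_zero] at h
      rw [h, hTdef]
      ring
    -- LHS expansion
    have hL : qB q x (n+1) = c * ((1-q)^(n+1))⁻¹
        - ((n:ℝ)+1) * ∑ l ∈ range (n+1),
            ((n.choose l : ℝ) * q ^ (((l:ℝ)+1) * x) * qn q x ^ (n - l)) * T l := by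
      rw [show qB q x (n+1) = c * ((1-q)^(n+1))⁻¹
        - ((n:ℝ)+1) * ∑' m : ℕ, q ^ ((m:ℝ)+x) * qn q ((m:ℝ)+x) ^ n from rfl,
        tsum_expand q x hq0 hq1 n]
    -- binomial identity
    have hkey : q ^ x * (1-q)⁻¹ + qn q x = (1-q)⁻¹ := by
      unfold qn; field_simp; ring
    have hbin : ((1-q)⁻¹)^(n+1)
        = ∑ j ∈ range (n+1), (q^x*(1-q)⁻¹)^(j+1) * qn q x ^ (n+1-(j+1)) * (((n+1).choose (j+1) : ℕ) : ℝ)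
          + qn q x ^ (n+1) := by
      have h := add_pow (q^x*(1-q)⁻¹) (qn q x) (n+1)
      rw [hkey] at h
      rw [h, Finset.sum_range_succ']
      simp
    -- choose identity
    have hch : ∀ l : ℕ, ((n:ℝ)+1) * (n.choose l : ℝ) = (((n+1).choose (l+1) : ℕ) : ℝ) * ((l:ℝ)+1) := by
      intro l
      have := Nat.add_one_mul_choose_eq n l
      exact_mod_cast congrArg (Nat.cast : ℕ → ℝ) this
    -- termwise rewrite of LHS sum
    have hterm : ((n:ℝ)+1) * ∑ l ∈ range (n+1),
            ((n.choose l : ℝ) * q ^ (((l:ℝ)+1) * x) * qn q x ^ (n - l)) * T l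
        = (∑ l ∈ range (n+1), (((n+1).choose (l+1) : ℕ) : ℝ) * (q^x*(1-q)⁻¹)^(l+1) * qn q x ^ (n-l) * c)
          - ∑ l ∈ range (n+1), (((n+1).choose (l+1) : ℕ) : ℝ) * q ^ (((l:ℝ)+1)*x) * qB q 0 (l+1) * qn q x ^ (n-l) := by
      rw [Finset.mul_sum, ← Finset.sum_sub_distrib]
      refine Finset.sum_congr rfl fun l hl => ?_
      have e4 : (q^x*(1-q)⁻¹)^(l+1) = q ^ (((l:ℝ)+1)*x) * ((1-q)^(l+1))⁻¹ := by
        rw [mul_pow, rpow_fact q x hq0 (l+1), inv_pow]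
        push_cast
        ring_nf
      rw [e4]
      have : ((n:ℝ)+1) * (((n.choose l : ℝ) * q ^ (((l:ℝ)+1) * x) * qn q x ^ (n - l)) * T l)
          = (((n+1).choose (l+1) : ℕ) : ℝ) * q ^ (((l:ℝ)+1) * x) * qn q x ^ (n - l) * (((l:ℝ)+1) * T l) := by
        linear_combination (q ^ (((l:ℝ) + 1) * x) * qn q x ^ (n - l) * T l) * hch l
      rw [this, hT l]
      ring
    -- RHS
    rw [hL, hterm]
    conv_rhs => rw [Finset.sum_range_succ']
    have hz : ((n+1).choose 0 : ℝ) * q ^ (((0:ℕ): ℝ) * x) * qB q 0 0 * qn q x ^ (n + 1 - 0)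
        = c * qn q x ^ (n+1) := by
      simp [qB, Real.rpow_zero, hc]
    rw [hz]
    have hsums : ∑ l ∈ range (n+1),
        (((n+1).choose (l+1) : ℕ) : ℝ) * q ^ (((l+1:ℕ) : ℝ) * x) * qB q 0 (l+1) * qn q x ^ (n + 1 - (l+1))
        = ∑ l ∈ range (n+1), (((n+1).choose (l+1) : ℕ) : ℝ) * q ^ (((l:ℝ)+1)*x) * qB q 0 (l+1) * qn q x ^ (n-l) := by
      refine Finset.sum_congr rfl fun l hl => ?_
      push_cast
      ring
    rw [hsums]
    have hb2 : ∑ l ∈ range (n+1), (((n+1).choose (l+1) : ℕ) : ℝ) * (q^x*(1-q)⁻¹)^(l+1) * qn q x ^ (n-l) * c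
        = c * (((1-q)⁻¹)^(n+1) - qn q x ^ (n+1)) := by
      have h5 : ((1-q)⁻¹)^(n+1) - qn q x ^ (n+1)
          = ∑ j ∈ range (n+1), (q^x*(1-q)⁻¹)^(j+1) * qn q x ^ (n+1-(j+1)) * (((n+1).choose (j+1) : ℕ) : ℝ) := by
        rw [hbin]; ring
      rw [h5, Finset.mul_sum]
      refine Finset.sum_congr rfl fun l hl => ?_
      rw [Nat.succ_sub_succ]
      ring
    rw [hb2, inv_pow]
    ring
end

section
/- Let q be a real number with 0 < q < 1, let f be a positive integer and χ a nontrivial complex Dirichlet character modulo f. Then for every integer n ≥ 1, the generalized q-Bernoulli number satisfies the distribution relation β_{n,χ}(q) = [f]_q^{n−1} · Σ_{a=1}^{f} χ(a) · β_n(a/f : q^f), where on the right the q-Bernoulli polynomial is formed with q replaced by q^f. -/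
open Finset

/-- `qn` at a natural argument is given by a natural power. -/
lemma qn_natCast (q : ℝ) (M : ℕ) : qn q ((M : ℕ) : ℝ) = (1 - q ^ M) / (1 - q) := by
  rw [qn, Real.rpow_natCast]

lemma qn_nonneg {q : ℝ} (hq0 : 0 < q) (hq1 : q < 1) (M : ℕ) :
    0 ≤ qn q ((M : ℕ) : ℝ) := by
  rw [qn_natCast]
  have h1 : q ^ M ≤ 1 := pow_le_one₀ hq0.le hq1.le
  have h2 : (0:ℝ) < 1 - q := by linarith
  exact div_nonneg (by linarith) h2.le

lemma qn_le {q : ℝ} (hq0 : 0 < q) (hq1 : q < 1) (M : ℕ) :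
    qn q ((M : ℕ) : ℝ) ≤ (1 - q)⁻¹ := by
  rw [qn_natCast, div_eq_mul_inv]
  have h2 : (0:ℝ) < 1 - q := by linarith
  have h3 : (0:ℝ) < q ^ M := pow_pos hq0 M
  have : (1 : ℝ) - q ^ M ≤ 1 := by linarith
  calc (1 - q ^ M) * (1 - q)⁻¹ ≤ 1 * (1 - q)⁻¹ := by
        apply mul_le_mul_of_nonneg_right this (by positivity)
    _ = (1 - q)⁻¹ := one_mul _

/-- Key exponent identity. -/
lemma rpow_key {q : ℝ} (hq0 : 0 < q) {f : ℕ} (hf : 0 < f) (a m : ℕ) :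
    (q ^ f : ℝ) ^ ((m : ℝ) + ((a : ℝ) + 1) / (f : ℝ)) = q ^ (f * m + a + 1) := by
  have hf' : (f : ℝ) ≠ 0 := Nat.cast_ne_zero.mpr hf.ne'
  rw [← Real.rpow_natCast q f, ← Real.rpow_mul hq0.le,
    ← Real.rpow_natCast q (f * m + a + 1)]
  congr 1
  push_cast
  field_simp
  ring

/-- Key `qn` multiplicativity identity. -/
lemma qn_key {q : ℝ} (hq0 : 0 < q) (hq1 : q < 1) {f : ℕ} (hf : 0 < f) (a m : ℕ) :
    qn q ((f : ℕ) : ℝ) * qn (q ^ f) ((m : ℝ) + ((a : ℝ) + 1) / (f : ℝ))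
      = qn q ((f * m + a + 1 : ℕ) : ℝ) := by
  have h1 : q ^ f < 1 := pow_lt_one₀ hq0.le hq1 hf.ne'
  have h2 : (1 : ℝ) - q ^ f ≠ 0 := by
    have : (0:ℝ) < 1 - q ^ f := by linarith
    exact this.ne'
  have h3 : (1:ℝ) - q ≠ 0 := by
    have : (0:ℝ) < 1 - q := by linarith
    exact this.ne'
  rw [qn_natCast, qn_natCast, qn, rpow_key hq0 hf a m]
  field_simp

/-- Division/mod equivalence `ℕ ≃ Fin f × ℕ`. -/
def natEquivFinProd (f : ℕ) (hf : 0 < f) : ℕ ≃ Fin f × ℕ where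
  toFun m := (⟨m % f, Nat.mod_lt m hf⟩, m / f)
  invFun p := f * p.2 + p.1.1
  left_inv m := Nat.div_add_mod m f
  right_inv p := by
    obtain ⟨⟨a, ha⟩, m⟩ := p
    have h1 : (f * m + a) / f = m := by
      rw [Nat.mul_add_div hf, Nat.div_eq_of_lt ha, add_zero]
    have h2 : (f * m + a) % f = a := by
      rw [Nat.mul_add_mod, Nat.mod_eq_of_lt ha]
    simp [h1, h2]

set_option maxHeartbeats 1000000 in
/-- Distribution relation for the generalized q-Bernoulli numbers attached to a
nontrivial Dirichlet character `χ` mod `f`: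
`β_{n,χ}(q) = [f]_q^{n-1} · Σ_{a=1}^{f} χ(a) · β_n(a/f : q^f)`, where
`β_{n,χ}(q) = -n·Σ_{m≥1} χ(m)·q^m·[m]_q^{n-1}`. -/
theorem generalized_qBernoulli_distribution (q : ℝ) (hq0 : 0 < q) (hq1 : q < 1)
    (f : ℕ) (hf : 0 < f) (χ : DirichletCharacter ℂ f)
    (hχ : ∑ a ∈ range f, χ ((a + 1 : ℕ) : ZMod f) = 0)
    (n : ℕ) (hn : 1 ≤ n) :
    -(n : ℂ) * ∑' m : ℕ, χ ((m + 1 : ℕ) : ZMod f) * ((q ^ (m + 1) : ℝ) : ℂ)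
        * ((qn q ((m : ℝ) + 1) ^ (n - 1) : ℝ) : ℂ)
      = ((qn q (f : ℝ) ^ (n - 1) : ℝ) : ℂ)
        * ∑ a ∈ range f, χ ((a + 1 : ℕ) : ZMod f)
          * ((qB (q ^ f) (((a : ℝ) + 1) / (f : ℝ)) n : ℝ) : ℂ) := by
  obtain ⟨k, rfl⟩ : ∃ k, n = k + 1 := ⟨n - 1, (Nat.succ_pred_eq_of_pos hn).symm⟩
  have hk : k + 1 - 1 = k := rfl
  rw [hk]
  have hq' : (0:ℝ) < 1 - q := by linarith
  -- the ℂ-valued summand on the left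
  set F : ℕ → ℂ := fun m => χ ((m + 1 : ℕ) : ZMod f) * ((q ^ (m + 1) : ℝ) : ℂ)
      * ((qn q ((m : ℝ) + 1) ^ k : ℝ) : ℂ) with hF
  -- rewrite F at natural argument
  have hF' : ∀ m : ℕ, F m = χ ((m + 1 : ℕ) : ZMod f)
      * ((q ^ (m + 1) * qn q ((m + 1 : ℕ) : ℝ) ^ k : ℝ) : ℂ) := by
    intro m
    simp only [hF]
    have h : ((m : ℝ) + 1) = ((m + 1 : ℕ) : ℝ) := by push_cast; ring
    rw [h, Complex.ofReal_mul, mul_assoc]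
  -- summability of F
  have hsF : Summable F := by
    apply Summable.of_norm_bounded (g := fun m => ((1 - q)⁻¹ ^ k * q) * q ^ m)
      ((summable_geometric_of_lt_one hq0.le hq1).mul_left _)
    intro m
    rw [hF' m]
    have h1 : ‖χ ((m + 1 : ℕ) : ZMod f)‖ ≤ 1 := DirichletCharacter.norm_le_one χ _
    have h2 : (0:ℝ) ≤ q ^ (m + 1) := by positivity
    have h3 : 0 ≤ qn q ((m + 1 : ℕ) : ℝ) := qn_nonneg hq0 hq1 _
    have h4 : qn q ((m + 1 : ℕ) : ℝ) ^ k ≤ (1 - q)⁻¹ ^ k :=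
      pow_le_pow_left₀ h3 (qn_le hq0 hq1 _) k
    rw [norm_mul]
    have h5 : ‖((q ^ (m + 1) * qn q ((m + 1 : ℕ) : ℝ) ^ k : ℝ) : ℂ)‖
        = q ^ (m + 1) * qn q ((m + 1 : ℕ) : ℝ) ^ k := by
      rw [Complex.norm_real, Real.norm_eq_abs,
        abs_of_nonneg (mul_nonneg h2 (pow_nonneg h3 k))]
    rw [h5]
    calc ‖χ ((m + 1 : ℕ) : ZMod f)‖ * (q ^ (m + 1) * qn q ((m + 1 : ℕ) : ℝ) ^ k)
        ≤ 1 * (q ^ (m + 1) * ((1 - q)⁻¹ ^ k)) := by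
          apply mul_le_mul h1 _ (by positivity) (by norm_num)
          exact mul_le_mul_of_nonneg_left h4 h2
      _ = (1 - q)⁻¹ ^ k * q * q ^ m := by rw [pow_succ]; ring
  -- the real inner series
  set g : ℕ → ℕ → ℝ := fun a m => q ^ (f * m + a + 1) * qn q ((f * m + a + 1 : ℕ) : ℝ) ^ k
    with hg
  -- Step 1 : reindex the LHS sum
  have key : ∑' m : ℕ, F m
      = ∑ a ∈ range f, χ ((a + 1 : ℕ) : ZMod f) * ((∑' m : ℕ, g a m : ℝ) : ℂ) := by
    have h1 : ∑' m : ℕ, F m = ∑' p : Fin f × ℕ, F ((natEquivFinProd f hf).symm p) :=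
      (((natEquivFinProd f hf).symm).tsum_eq F).symm
    have hsF2 : Summable (fun p : Fin f × ℕ => F ((natEquivFinProd f hf).symm p)) :=
      (Equiv.summable_iff (natEquivFinProd f hf).symm).mpr hsF
    rw [h1, Summable.tsum_prod' hsF2 fun b => hsF2.prod_factor b, tsum_fintype]
    have hGa : ∀ a : ℕ, ∑' m : ℕ, F (f * m + a)
        = χ ((a + 1 : ℕ) : ZMod f) * ((∑' m : ℕ, g a m : ℝ) : ℂ) := by
      intro a
      have hterm : ∀ m : ℕ, F (f * m + a)
          = χ ((a + 1 : ℕ) : ZMod f) * ((g a m : ℝ) : ℂ) := by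
        intro m
        rw [hF' (f * m + a)]
        have hχeq : (((f * m + a) + 1 : ℕ) : ZMod f) = ((a + 1 : ℕ) : ZMod f) := by
          push_cast [ZMod.natCast_self]
          ring
        have hidx : (f * m + a) + 1 = f * m + a + 1 := rfl
        rw [hχeq]
      rw [tsum_congr hterm, tsum_mul_left, Complex.ofReal_tsum]
    calc ∑ b : Fin f, ∑' m : ℕ, F ((natEquivFinProd f hf).symm (b, m))
        = ∑ b : Fin f, ∑' m : ℕ, F (f * m + (b : ℕ)) := by
          exact Finset.sum_congr rfl fun b _ => tsum_congr fun m => rfl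
      _ = ∑ b : Fin f, χ (((b : ℕ) + 1 : ℕ) : ZMod f) * ((∑' m : ℕ, g (b : ℕ) m : ℝ) : ℂ) := by
          exact Finset.sum_congr rfl fun b _ => hGa (b : ℕ)
      _ = ∑ a ∈ range f, χ ((a + 1 : ℕ) : ZMod f) * ((∑' m : ℕ, g a m : ℝ) : ℂ) :=
          Fin.sum_univ_eq_sum_range
            (fun a => χ ((a + 1 : ℕ) : ZMod f) * ((∑' m : ℕ, g a m : ℝ) : ℂ)) f
  -- Step 2 : rewrite each qB term
  have hqBr : ∀ a : ℕ, qB (q ^ f) (((a : ℝ) + 1) / (f : ℝ)) (k + 1)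
      = (q ^ f - 1) / Real.log (q ^ f) * ((1 - q ^ f) ^ (k + 1))⁻¹
        - ((k : ℝ) + 1) * ∑' m : ℕ, (q ^ f : ℝ) ^ ((m : ℝ) + ((a : ℝ) + 1) / (f : ℝ))
            * qn (q ^ f) ((m : ℝ) + ((a : ℝ) + 1) / (f : ℝ)) ^ k := fun a => rfl
  have hqB : ∀ a : ℕ, ((qB (q ^ f) (((a : ℝ) + 1) / (f : ℝ)) (k + 1) : ℝ) : ℂ)
      = (((q ^ f - 1) / Real.log (q ^ f) * ((1 - q ^ f) ^ (k + 1))⁻¹ : ℝ) : ℂ)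
        - ((k : ℂ) + 1) * ∑' m : ℕ, (((q ^ f : ℝ) ^ ((m : ℝ) + ((a : ℝ) + 1) / (f : ℝ))
            * qn (q ^ f) ((m : ℝ) + ((a : ℝ) + 1) / (f : ℝ)) ^ k : ℝ) : ℂ) := by
    intro a
    rw [hqBr a]
    push_cast [Complex.ofReal_tsum]
    ring
  -- Step 3 : pointwise identity after multiplying by `qn q f ^ k`
  have hpt : ∀ a m : ℕ, qn q ((f : ℕ) : ℝ) ^ k
      * ((q ^ f : ℝ) ^ ((m : ℝ) + ((a : ℝ) + 1) / (f : ℝ))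
          * qn (q ^ f) ((m : ℝ) + ((a : ℝ) + 1) / (f : ℝ)) ^ k) = g a m := by
    intro a m
    rw [hg, rpow_key hq0 hf a m]
    have hqk := qn_key hq0 hq1 hf a m
    calc qn q ((f : ℕ) : ℝ) ^ k * (q ^ (f * m + a + 1)
          * qn (q ^ f) ((m : ℝ) + ((a : ℝ) + 1) / (f : ℝ)) ^ k)
        = q ^ (f * m + a + 1) * (qn q ((f : ℕ) : ℝ)
            * qn (q ^ f) ((m : ℝ) + ((a : ℝ) + 1) / (f : ℝ))) ^ k := by
          rw [mul_pow]; ring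
      _ = q ^ (f * m + a + 1) * qn q ((f * m + a + 1 : ℕ) : ℝ) ^ k := by rw [hqk]
  -- Step 4 : multiply the inner series by `qn q f ^ k`
  have hSa : ∀ a : ℕ, ((qn q ((f : ℕ) : ℝ) ^ k : ℝ) : ℂ)
      * ∑' m : ℕ, (((q ^ f : ℝ) ^ ((m : ℝ) + ((a : ℝ) + 1) / (f : ℝ))
          * qn (q ^ f) ((m : ℝ) + ((a : ℝ) + 1) / (f : ℝ)) ^ k : ℝ) : ℂ)
      = ((∑' m : ℕ, g a m : ℝ) : ℂ) := by
    intro a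
    rw [← tsum_mul_left, Complex.ofReal_tsum]
    exact tsum_congr fun m => by rw [← Complex.ofReal_mul, hpt a m]
  -- Put everything together
  rw [key]
  have step : ∑ a ∈ range f, χ ((a + 1 : ℕ) : ZMod f)
        * ((qB (q ^ f) (((a : ℝ) + 1) / (f : ℝ)) (k + 1) : ℝ) : ℂ)
      = -(((k : ℂ) + 1) * ∑ a ∈ range f, χ ((a + 1 : ℕ) : ZMod f)
          * ∑' m : ℕ, (((q ^ f : ℝ) ^ ((m : ℝ) + ((a : ℝ) + 1) / (f : ℝ))
              * qn (q ^ f) ((m : ℝ) + ((a : ℝ) + 1) / (f : ℝ)) ^ k : ℝ) : ℂ)) := by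
    have step1 : ∀ a ∈ range f, χ ((a + 1 : ℕ) : ZMod f)
          * ((qB (q ^ f) (((a : ℝ) + 1) / (f : ℝ)) (k + 1) : ℝ) : ℂ)
        = χ ((a + 1 : ℕ) : ZMod f)
            * (((q ^ f - 1) / Real.log (q ^ f) * ((1 - q ^ f) ^ (k + 1))⁻¹ : ℝ) : ℂ)
          - ((k : ℂ) + 1) * (χ ((a + 1 : ℕ) : ZMod f)
            * ∑' m : ℕ, (((q ^ f : ℝ) ^ ((m : ℝ) + ((a : ℝ) + 1) / (f : ℝ))
                * qn (q ^ f) ((m : ℝ) + ((a : ℝ) + 1) / (f : ℝ)) ^ k : ℝ) : ℂ)) := by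
      intro a _
      rw [hqB a]; ring
    rw [Finset.sum_congr rfl step1, Finset.sum_sub_distrib, ← Finset.sum_mul, hχ,
      zero_mul, zero_sub, ← Finset.mul_sum]
  rw [step, mul_neg, neg_mul, neg_inj]
  simp only [Finset.mul_sum]
  apply Finset.sum_congr rfl
  intro a _
  have hqnf : qn q (f : ℝ) = qn q ((f : ℕ) : ℝ) := rfl
  rw [hqnf, ← hSa a]
  push_cast
  ring
end

section
/- Let q be a real number with 0 < q < 1, let f be a positive integer and χ a nontrivial complex Dirichlet character modulo f, and let x ≥ 0 be real. Then for every complex number t, −t · Σ_{n=0}^{∞} χ(n) · q^{n+x} · exp([n+x]_q · t) = (1/[f]_q) · Σ_{a=1}^{f} χ(a) · F_{q^f}( (a+x)/f , [f]_q · t ), i.e. the generating function of the generalized q-Bernoulli polynomials attached to χ is an average of the q^f-Bernoulli generating functions F_{q^f}. -/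
open Finset

/-- The generating function of the q-Bernoulli polynomials (with base `Q`):
`F_Q(y,t) = ((Q-1)/log Q)·exp(t/(1-Q)) - t·Σ_{m≥0} Q^{m+y}·exp([m+y]_Q·t)`. -/
noncomputable def Fgen (Q y : ℝ) (t : ℂ) : ℂ :=
  (((Q - 1) / Real.log Q : ℝ) : ℂ) * Complex.exp (t / ((1 - Q : ℝ) : ℂ))
    - t * ∑' m : ℕ, ((Q ^ ((m : ℝ) + y) : ℝ) : ℂ)
        * Complex.exp (((qn Q ((m : ℝ) + y) : ℝ) : ℂ) * t)

private lemma summable_main {q : ℝ} (hq0 : 0 < q) (hq1 : q < 1) {x : ℝ} (hx : 0 ≤ x) (t : ℂ)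
    (c : ℕ → ℂ) (hc : ∀ n, ‖c n‖ ≤ 1) :
    Summable (fun n : ℕ => c n * ((q ^ ((n : ℝ) + x) : ℝ) : ℂ)
      * Complex.exp (((qn q ((n : ℝ) + x) : ℝ) : ℂ) * t)) := by
  have h1q : 0 < 1 - q := by linarith
  apply Summable.of_norm
  refine Summable.of_nonneg_of_le (fun n => norm_nonneg _) (fun n => ?_)
    ((summable_geometric_of_lt_one hq0.le hq1).mul_left (q ^ x * Real.exp (‖t‖ / (1 - q))))
  have hnx : (0:ℝ) ≤ (n : ℝ) + x := by positivity
  have hqnx0 : 0 ≤ q ^ ((n:ℝ) + x) := Real.rpow_nonneg hq0.le _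
  have hqnx1 : q ^ ((n:ℝ) + x) ≤ 1 := Real.rpow_le_one hq0.le hq1.le hnx
  have hr0 : 0 ≤ qn q ((n:ℝ) + x) := div_nonneg (by linarith) h1q.le
  have hr1 : qn q ((n:ℝ) + x) ≤ 1 / (1 - q) := by
    unfold qn
    gcongr
    linarith
  have hA : ‖((q ^ ((n:ℝ)+x) : ℝ) : ℂ)‖ = q ^ x * q ^ n := by
    rw [Complex.norm_real, Real.norm_of_nonneg hqnx0, Real.rpow_add hq0, Real.rpow_natCast,
      mul_comm]
  have hE : ‖Complex.exp (((qn q ((n:ℝ)+x) : ℝ):ℂ) * t)‖ ≤ Real.exp (‖t‖/(1-q)) := by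
    rw [Complex.norm_exp]
    apply Real.exp_le_exp.mpr
    have hre : ((((qn q ((n:ℝ)+x) : ℝ):ℂ)) * t).re = qn q ((n:ℝ)+x) * t.re := by
      simp [Complex.mul_re]
    rw [hre]
    calc qn q ((n:ℝ)+x) * t.re ≤ qn q ((n:ℝ)+x) * ‖t‖ := by
          apply mul_le_mul_of_nonneg_left _ hr0
          exact Complex.re_le_norm t
      _ ≤ (1/(1-q)) * ‖t‖ := mul_le_mul_of_nonneg_right hr1 (norm_nonneg t)
      _ = ‖t‖ / (1-q) := by ring
  calc ‖c n * ((q ^ ((n:ℝ)+x) : ℝ) : ℂ) * Complex.exp (((qn q ((n:ℝ)+x) : ℝ):ℂ) * t)‖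
      = ‖c n‖ * ‖((q ^ ((n:ℝ)+x) : ℝ) : ℂ)‖ * ‖Complex.exp (((qn q ((n:ℝ)+x) : ℝ):ℂ) * t)‖ := by
        rw [norm_mul, norm_mul]
    _ ≤ 1 * (q ^ x * q ^ n) * Real.exp (‖t‖/(1-q)) := by
        rw [hA]
        have hb : (0:ℝ) ≤ q ^ x * q ^ n := by positivity
        exact mul_le_mul (mul_le_mul_of_nonneg_right (hc n) hb) hE (norm_nonneg _)
          (by positivity)
    _ = q ^ x * Real.exp (‖t‖/(1-q)) * q ^ n := by ring

private lemma tsum_residues {f : ℕ} (hf : 0 < f) {g : ℕ → ℂ} (hg : Summable g) :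
    ∑' n : ℕ, g n = ∑ a ∈ range f, ∑' k : ℕ, g (k * f + a) := by
  haveI : NeZero f := ⟨hf.ne'⟩
  rw [← (((Nat.divModEquiv f).trans (Equiv.prodComm ℕ (Fin f))).symm.tsum_eq g)]
  have hs : Summable (fun p : Fin f × ℕ =>
      g (((Nat.divModEquiv f).trans (Equiv.prodComm ℕ (Fin f))).symm p)) :=
    hg.comp_injective (Equiv.injective _)
  rw [Summable.tsum_prod' hs (fun b => hs.prod_factor b), tsum_fintype,
    ← Fin.sum_univ_eq_sum_range (fun a => ∑' k : ℕ, g (k * f + a)) f]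
  exact Finset.sum_congr rfl fun b _ => tsum_congr fun k => rfl

/-- The generating function of the generalized q-Bernoulli polynomials attached to a
nontrivial Dirichlet character `χ` mod `f` is an average of `q^f`-Bernoulli generating
functions:
`-t·Σ_{n≥0} χ(n)·q^{n+x}·exp([n+x]_q·t) = (1/[f]_q)·Σ_{a=1}^{f} χ(a)·F_{q^f}((a+x)/f, [f]_q·t)`. -/
theorem generalized_qBernoulli_generating_function (q : ℝ) (hq0 : 0 < q) (hq1 : q < 1)
    (f : ℕ) (hf : 0 < f) (χ : DirichletCharacter ℂ f)
    (hχ : ∑ a ∈ range f, χ ((a + 1 : ℕ) : ZMod f) = 0)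
    (x : ℝ) (hx : 0 ≤ x) (t : ℂ) :
    -t * ∑' m : ℕ, χ (m : ZMod f) * ((q ^ ((m : ℝ) + x) : ℝ) : ℂ)
        * Complex.exp (((qn q ((m : ℝ) + x) : ℝ) : ℂ) * t)
      = (1 / ((qn q (f : ℝ) : ℝ) : ℂ))
        * ∑ a ∈ range f, χ ((a + 1 : ℕ) : ZMod f)
          * Fgen (q ^ f) (((a : ℝ) + 1 + x) / (f : ℝ)) (((qn q (f : ℝ) : ℝ) : ℂ) * t) := by
  have hf1 : 1 < f := by
    by_contra h
    push_neg at h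
    have hfe : f = 1 := le_antisymm h hf
    subst hfe
    simp at hχ
    have h01 : (0 : ZMod 1) = 1 := Subsingleton.elim _ _
    rw [h01, map_one] at hχ
    exact one_ne_zero hχ
  have h1q : 0 < 1 - q := by linarith
  have hQ0 : 0 < q ^ f := pow_pos hq0 f
  have hQ1 : q ^ f < 1 := pow_lt_one₀ hq0.le hq1 hf.ne'
  have hqf : q ^ ((f : ℕ) : ℝ) = q ^ f := Real.rpow_natCast q f
  have hT0 : 0 < qn q (f : ℝ) := by
    unfold qn
    rw [hqf]
    exact div_pos (by linarith) h1q
  set g : ℕ → ℂ := fun n : ℕ => χ (n : ZMod f) * ((q ^ ((n : ℝ) + x) : ℝ) : ℂ)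
      * Complex.exp (((qn q ((n : ℝ) + x) : ℝ) : ℂ) * t) with hgdef
  have hgsum : Summable g := summable_main hq0 hq1 hx t _ (fun n => χ.norm_le_one _)
  -- per-a step
  have step : ∀ a : ℕ, a < f →
      χ ((a + 1 : ℕ) : ZMod f) * (∑' m : ℕ, (((q ^ f) ^ ((m : ℝ) + ((a : ℝ) + 1 + x) / f) : ℝ) : ℂ)
        * Complex.exp (((qn (q ^ f) ((m : ℝ) + ((a : ℝ) + 1 + x) / f) : ℝ) : ℂ)
          * (((qn q (f : ℝ) : ℝ) : ℂ) * t)))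
      = ∑' k : ℕ, g (k * f + (a + 1)) := by
    intro a ha
    rw [← tsum_mul_left]
    refine tsum_congr fun k => ?_
    have hfne : (f : ℝ) ≠ 0 := Nat.cast_ne_zero.mpr hf.ne'
    have hexp : (f : ℝ) * ((k : ℝ) + ((a : ℝ) + 1 + x) / f) = ((k * f + (a + 1) : ℕ) : ℝ) + x := by
      push_cast
      field_simp
      ring
    have e1 : (q ^ f) ^ ((k : ℝ) + ((a : ℝ) + 1 + x) / f)
        = q ^ (((k * f + (a + 1) : ℕ) : ℝ) + x) := by
      rw [← hqf, ← Real.rpow_mul hq0.le, hexp]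
    have e2 : qn (q ^ f) ((k : ℝ) + ((a : ℝ) + 1 + x) / f) * qn q (f : ℝ)
        = qn q (((k * f + (a + 1) : ℕ) : ℝ) + x) := by
      unfold qn
      rw [e1, hqf]
      have h1 : (1:ℝ) - q ^ f ≠ 0 := by linarith
      field_simp
    have hcast : ((k * f + (a + 1) : ℕ) : ZMod f) = ((a + 1 : ℕ) : ZMod f) := by
      push_cast
      simp [ZMod.natCast_self]
    have hgval : g (k * f + (a + 1)) = χ ((a + 1 : ℕ) : ZMod f)
        * (((q ^ (((k * f + (a + 1) : ℕ) : ℝ) + x) : ℝ) : ℂ)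
          * Complex.exp (((qn q (((k * f + (a + 1) : ℕ) : ℝ) + x) : ℝ) : ℂ) * t)) := by
      simp only [hgdef]
      rw [hcast]
      ring
    rw [hgval, e1, ← mul_assoc (((qn (q ^ f) ((k : ℝ) + ((a : ℝ) + 1 + x) / f) : ℝ) : ℂ)),
      ← Complex.ofReal_mul, e2]
  -- shift sum
  have hshift : ∑ a ∈ range f, ∑' k : ℕ, g (k * f + (a + 1)) = ∑' n : ℕ, g n := by
    have hg1 : Summable (fun n : ℕ => g (n + 1)) := (summable_nat_add_iff 1).mpr hgsum
    have h0 : g 0 = 0 := by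
      haveI : Fact (1 < f) := ⟨hf1⟩
      have h00 : χ (0 : ZMod f) = 0 := χ.map_nonunit not_isUnit_zero
      simp [hgdef, h00]
    have hres := tsum_residues hf hg1
    calc ∑ a ∈ range f, ∑' k : ℕ, g (k * f + (a + 1))
        = ∑' n : ℕ, g (n + 1) := hres.symm
      _ = ∑' n : ℕ, g n := by rw [Summable.tsum_eq_zero_add hgsum, h0, zero_add]
  -- assemble RHS
  have hFgen : ∑ a ∈ range f, χ ((a + 1 : ℕ) : ZMod f)
        * Fgen (q ^ f) (((a : ℝ) + 1 + x) / (f : ℝ)) (((qn q (f : ℝ) : ℝ) : ℂ) * t)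
      = -((((qn q (f : ℝ) : ℝ) : ℂ) * t) * ∑' n : ℕ, g n) := by
    simp only [Fgen, mul_sub]
    rw [Finset.sum_sub_distrib, ← Finset.sum_mul, hχ, zero_mul, zero_sub, neg_inj]
    have : ∀ a ∈ range f, χ ((a + 1 : ℕ) : ZMod f)
        * ((((qn q (f : ℝ) : ℝ) : ℂ) * t) * ∑' m : ℕ,
            (((q ^ f) ^ ((m : ℝ) + ((a : ℝ) + 1 + x) / f) : ℝ) : ℂ)
            * Complex.exp (((qn (q ^ f) ((m : ℝ) + ((a : ℝ) + 1 + x) / f) : ℝ) : ℂ)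
              * (((qn q (f : ℝ) : ℝ) : ℂ) * t)))
        = (((qn q (f : ℝ) : ℝ) : ℂ) * t) * ∑' k : ℕ, g (k * f + (a + 1)) := by
      intro a ha
      rw [← step a (mem_range.mp ha)]
      ring
    rw [Finset.sum_congr rfl this, ← Finset.mul_sum, hshift]
  rw [hFgen]
  have hTne : (((qn q (f : ℝ) : ℝ)) : ℂ) ≠ 0 := by
    exact_mod_cast hT0.ne'
  field_simp
end

section
/- Let q be a real number with 0 < q < 1, let r ≥ 1 be an integer, let f be a positive integer and χ a complex Dirichlet character modulo f. Then for every complex number s, the multiple q-L-function satisfies L_{q,r}(s, χ) = [f]_q^{−s} · Σ_{a₁,…,a_r = 1}^{f} χ(a₁)·χ(a₂)···χ(a_r) · ζ_{q^f,r}( s , (a₁+…+a_r)/f | 1,…,1 ), where on the right the multiple q-zeta function is formed with q replaced by q^f. -/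
open Finset

/-- The complex power `r^s := exp(s·log r)` of a positive real `r` (real logarithm). -/
noncomputable def rpowC (r : ℝ) (s : ℂ) : ℂ := Complex.exp (s * (Real.log r : ℂ))

/-- The Barnes-type Changhee multiple q-zeta function
`ζ_{Q,r}(s,w|w₁,…,w_r) = (Π wᵢ)·Σ_{ν} Q^{w+Σ wᵢνᵢ}/[w+Σ wᵢνᵢ]_Q^s`. -/
noncomputable def multZeta (Q : ℝ) (r : ℕ) (w : ℝ) (ws : Fin r → ℝ) (s : ℂ) : ℂ :=
  ((∏ i, ws i : ℝ) : ℂ) * ∑' ν : Fin r → ℕ,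
    ((Q ^ (w + ∑ i, ws i * (ν i : ℝ)) : ℝ) : ℂ)
      / rpowC (qn Q (w + ∑ i, ws i * (ν i : ℝ))) s

/-- The multiple q-L-function
`L_{q,r}(s,χ) = Σ_{n₁,…,n_r ≥ 1} χ(n₁)···χ(n_r)·q^{n₁+…+n_r}/[n₁+…+n_r]_q^s`. -/
noncomputable def multL (q : ℝ) (r : ℕ) {f : ℕ} (χ : DirichletCharacter ℂ f) (s : ℂ) : ℂ :=
  ∑' ν : Fin r → ℕ, (∏ k, χ ((ν k + 1 : ℕ) : ZMod f))
    * ((q ^ (∑ i, ((ν i : ℝ) + 1)) : ℝ) : ℂ) / rpowC (qn q (∑ i, ((ν i : ℝ) + 1))) s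

lemma rpowC_ne_zero (x : ℝ) (s : ℂ) : rpowC x s ≠ 0 := Complex.exp_ne_zero _

lemma rpowC_neg (x : ℝ) (s : ℂ) : rpowC x (-s) = (rpowC x s)⁻¹ := by
  rw [rpowC, rpowC, ← Complex.exp_neg, neg_mul]

lemma rpowC_mul_base {x y : ℝ} (hx : 0 < x) (hy : 0 < y) (s : ℂ) :
    rpowC (x * y) s = rpowC x s * rpowC y s := by
  rw [rpowC, rpowC, rpowC, Real.log_mul hx.ne' hy.ne', ← Complex.exp_add]
  push_cast
  ring_nf

lemma norm_rpowC (x : ℝ) (s : ℂ) : ‖rpowC x s‖ = Real.exp (s.re * Real.log x) := by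
  rw [rpowC, Complex.norm_exp]
  simp [Complex.mul_re]

/-- Summability of the `r`-fold geometric series. -/
lemma summable_pi_geom {q : ℝ} (hq0 : 0 ≤ q) (hq1 : q < 1) (r : ℕ) :
    Summable fun ν : Fin r → ℕ => q ^ (∑ i, ν i) := by
  induction r with
  | zero => exact .of_finite
  | succ n ih =>
      have he := (Fin.consEquiv (fun _ : Fin (n + 1) => ℕ)).summable_iff
        (f := fun ν : Fin (n + 1) → ℕ => q ^ (∑ i, ν i))
      rw [← he]
      have h := (summable_geometric_of_lt_one hq0 hq1).mul_of_nonneg ih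
        (fun k => pow_nonneg hq0 k) (fun ν => pow_nonneg hq0 _)
      refine h.congr fun p => ?_
      simp [Fin.consEquiv, Fin.sum_cons, pow_add]

/-- Summability of the multiple q-L series. -/
lemma summable_multL_summand (q : ℝ) (hq0 : 0 < q) (hq1 : q < 1) (r : ℕ) (hr : 1 ≤ r)
    (f : ℕ) (χ : DirichletCharacter ℂ f) (s : ℂ) :
    Summable fun ν : Fin r → ℕ => (∏ k, χ ((ν k + 1 : ℕ) : ZMod f))
      * ((q ^ (∑ i, ((ν i : ℝ) + 1)) : ℝ) : ℂ) / rpowC (qn q (∑ i, ((ν i : ℝ) + 1))) s := by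
  have h1q : (0:ℝ) < 1 - q := by linarith
  set L : ℝ := Real.log ((1 - q)⁻¹) with hL
  have hL0 : 0 ≤ L := Real.log_nonneg (by rw [le_inv_comm₀] <;> linarith)
  set c : ℝ := Real.exp (|s.re| * L) with hc
  apply Summable.of_norm_bounded (g := fun ν : Fin r → ℕ => (c * q ^ r) * q ^ (∑ i, ν i))
    (((summable_pi_geom hq0.le hq1 r).mul_left _))
  intro ν
  set X : ℝ := ∑ i, ((ν i : ℝ) + 1) with hXdef
  have hX : X = ((∑ i, ν i) + r : ℕ) := by
    rw [hXdef]
    push_cast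
    rw [Finset.sum_add_distrib]
    simp
  have hX1 : (1:ℝ) ≤ X := by
    rw [hX]
    have : 1 ≤ (∑ i, ν i) + r := by omega
    exact_mod_cast this
  have hqX_pos : 0 < q ^ X := Real.rpow_pos_of_pos hq0 X
  have hqX_le : q ^ X ≤ q := by
    have := Real.rpow_le_rpow_of_exponent_ge hq0 hq1.le hX1
    simpa using this
  set ρ : ℝ := qn q X with hρ
  have hρ1 : 1 ≤ ρ := by
    rw [hρ, qn, le_div_iff₀ h1q]
    linarith
  have hρle : ρ ≤ (1 - q)⁻¹ := by
    rw [hρ, qn, div_le_iff₀ h1q, inv_mul_cancel₀ h1q.ne']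
    linarith
  have hlog0 : 0 ≤ Real.log ρ := Real.log_nonneg hρ1
  have hlogL : Real.log ρ ≤ L := Real.log_le_log (by linarith) hρle
  have hnormC : Real.exp (-(|s.re| * L)) ≤ ‖rpowC ρ s‖ := by
    rw [norm_rpowC]
    apply Real.exp_le_exp.2
    nlinarith [neg_abs_le s.re, le_abs_self s.re, abs_nonneg s.re]
  have hA : ‖∏ k, χ ((ν k + 1 : ℕ) : ZMod f)‖ ≤ 1 := by
    rw [norm_prod]
    exact Finset.prod_le_one (fun k _ => norm_nonneg _)
      (fun k _ => DirichletCharacter.norm_le_one χ _)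
  have hnum : ‖(∏ k, χ ((ν k + 1 : ℕ) : ZMod f)) * ((q ^ X : ℝ) : ℂ)‖ ≤ q ^ X := by
    rw [norm_mul, Complex.norm_real, Real.norm_of_nonneg hqX_pos.le]
    nlinarith
  have hexp_pos : (0:ℝ) < Real.exp (-(|s.re| * L)) := Real.exp_pos _
  calc ‖(∏ k, χ ((ν k + 1 : ℕ) : ZMod f)) * ((q ^ X : ℝ) : ℂ) / rpowC ρ s‖
      = ‖(∏ k, χ ((ν k + 1 : ℕ) : ZMod f)) * ((q ^ X : ℝ) : ℂ)‖ / ‖rpowC ρ s‖ := by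
        rw [norm_div]
    _ ≤ q ^ X / Real.exp (-(|s.re| * L)) := by
        apply div_le_div₀ (Real.rpow_nonneg hq0.le X) hnum hexp_pos hnormC
    _ = c * q ^ X := by
        rw [Real.exp_neg, div_eq_mul_inv, inv_inv]; ring
    _ = (c * q ^ r) * q ^ (∑ i, ν i) := by
        rw [hX, Real.rpow_natCast, pow_add]; ring

/-- Splitting a tuple of positive integers into residues and quotients mod `f`. -/
def splitEquiv (f r : ℕ) (hf : 0 < f) : (Fin r → Fin f) × (Fin r → ℕ) ≃ (Fin r → ℕ) where
  toFun p := fun i => (p.1 i : ℕ) + f * p.2 i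
  invFun ν := (fun i => ⟨ν i % f, Nat.mod_lt _ hf⟩, fun i => ν i / f)
  left_inv p := by
    refine Prod.ext ?_ ?_ <;> funext i
    · apply Fin.ext
      simp [Nat.add_mul_mod_self_left, Nat.mod_eq_of_lt (p.1 i).isLt]
    · simp [Nat.add_mul_div_left _ _ hf, Nat.div_eq_of_lt (p.1 i).isLt]
  right_inv ν := funext fun i => Nat.mod_add_div (ν i) f

set_option maxHeartbeats 1000000 in
/-- Relation between the multiple q-L-function and the multiple q-zeta function formed
with `q^f`:
`L_{q,r}(s,χ) = [f]_q^{-s}·Σ_{a₁,…,a_r=1}^{f} χ(a₁)···χ(a_r)·ζ_{q^f,r}(s,(a₁+…+a_r)/f | 1,…,1)`. -/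
theorem multL_eq_sum_multZeta (q : ℝ) (hq0 : 0 < q) (hq1 : q < 1)
    (r : ℕ) (hr : 1 ≤ r) (f : ℕ) (hf : 0 < f) (χ : DirichletCharacter ℂ f) (s : ℂ) :
    multL q r χ s = rpowC (qn q (f : ℝ)) (-s)
      * ∑ a : Fin r → Fin f, (∏ k, χ (((a k : ℕ) + 1 : ℕ) : ZMod f))
        * multZeta (q ^ f) r ((∑ i, (((a i : ℕ) : ℝ) + 1)) / (f : ℝ)) (fun _ => 1) s := by
  have hf' : (0:ℝ) < f := by exact_mod_cast hf
  have h1q : (0:ℝ) < 1 - q := by linarith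
  have hqf0 : (0:ℝ) < q ^ f := pow_pos hq0 f
  have hqf1 : q ^ f < 1 := pow_lt_one₀ hq0.le hq1 (by omega)
  have h1qf : (0:ℝ) < 1 - q ^ f := by linarith
  have hqnf : qn q (f : ℝ) = (1 - q ^ f) / (1 - q) := by
    rw [qn, Real.rpow_natCast]
  have hqnf_pos : 0 < qn q (f : ℝ) := by
    rw [hqnf]; exact div_pos h1qf h1q
  have hF := summable_multL_summand q hq0 hq1 r hr f χ s
  set e := splitEquiv f r hf with he
  rw [multL, ← e.tsum_eq]
  have hFe : Summable (fun p : (Fin r → Fin f) × (Fin r → ℕ) =>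
      (∏ k, χ (((e p) k + 1 : ℕ) : ZMod f))
        * ((q ^ (∑ i, (((e p) i : ℝ) + 1)) : ℝ) : ℂ)
        / rpowC (qn q (∑ i, (((e p) i : ℝ) + 1))) s) :=
    e.summable_iff.2 hF
  rw [Summable.tsum_prod' hFe (fun a => hFe.prod_factor a), tsum_fintype, Finset.mul_sum]
  refine Finset.sum_congr rfl (fun a _ => ?_)
  set w : ℝ := (∑ i, (((a i : ℕ) : ℝ) + 1)) / (f : ℝ) with hwdef
  have hw : (f : ℝ) * w = ∑ i, (((a i : ℕ) : ℝ) + 1) := by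
    rw [hwdef, mul_div_cancel₀ _ hf'.ne']
  have hw_pos : 0 < w := by
    apply div_pos _ hf'
    apply Finset.sum_pos (fun i _ => by positivity)
    have : Nonempty (Fin r) := Fin.pos_iff_nonempty.mp (by omega)
    exact Finset.univ_nonempty
  -- termwise identity
  have key : ∀ m : Fin r → ℕ,
      (∏ k, χ (((e (a, m)) k + 1 : ℕ) : ZMod f))
        * ((q ^ (∑ i, (((e (a, m)) i : ℝ) + 1)) : ℝ) : ℂ)
        / rpowC (qn q (∑ i, (((e (a, m)) i : ℝ) + 1))) s
      = (rpowC (qn q (f : ℝ)) (-s) * ∏ k, χ (((a k : ℕ) + 1 : ℕ) : ZMod f)) *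
        ((((q ^ f) ^ (w + ∑ i, (m i : ℝ)) : ℝ) : ℂ)
          / rpowC (qn (q ^ f) (w + ∑ i, (m i : ℝ))) s) := by
    intro m
    have hei : ∀ i, (e (a, m)) i = (a i : ℕ) + f * m i := fun i => rfl
    set Y : ℝ := w + ∑ i, (m i : ℝ) with hYdef
    have hY_pos : 0 < Y := by
      rw [hYdef]
      have : (0:ℝ) ≤ ∑ i, (m i : ℝ) := Finset.sum_nonneg fun i _ => by positivity
      linarith
    have hX : (∑ i, (((e (a, m)) i : ℝ) + 1)) = (f : ℝ) * Y := by
      have h1 : ∀ i ∈ Finset.univ, (((e (a, m)) i : ℝ) + 1)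
          = ((((a i : ℕ) : ℝ) + 1) + (f : ℝ) * (m i : ℝ)) := by
        intro i _
        rw [hei i]; push_cast; ring
      rw [Finset.sum_congr rfl h1, Finset.sum_add_distrib, ← Finset.mul_sum, hYdef,
        mul_add, hw]
    have hQY : (q ^ f : ℝ) ^ Y = q ^ ((f : ℝ) * Y) := by
      rw [Real.rpow_mul hq0.le, Real.rpow_natCast]
    have hnum : (q : ℝ) ^ (∑ i, (((e (a, m)) i : ℝ) + 1)) = (q ^ f : ℝ) ^ Y := by
      rw [hX, hQY]
    have hQY_pos : 0 < (q ^ f : ℝ) ^ Y := Real.rpow_pos_of_pos hqf0 Y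
    have hQY_lt1 : (q ^ f : ℝ) ^ Y < 1 := Real.rpow_lt_one hqf0.le hqf1 hY_pos
    have hqnQ_pos : 0 < qn (q ^ f) Y := div_pos (by linarith) (by linarith)
    have hden : qn q (∑ i, (((e (a, m)) i : ℝ) + 1)) = qn q (f : ℝ) * qn (q ^ f) Y := by
      simp only [qn, Real.rpow_natCast]
      rw [hnum]
      field_simp
    have hchi : (∏ k, χ (((e (a, m)) k + 1 : ℕ) : ZMod f))
        = ∏ k, χ (((a k : ℕ) + 1 : ℕ) : ZMod f) := by
      refine Finset.prod_congr rfl fun k _ => ?_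
      congr 1
      rw [hei k]
      push_cast
      simp [ZMod.natCast_self]
    rw [hchi, hnum, hden, rpowC_mul_base hqnf_pos hqnQ_pos, rpowC_neg]
    simp only [div_eq_mul_inv, mul_inv]
    ring
  rw [tsum_congr key, tsum_mul_left]
  have hmz : multZeta (q ^ f) r w (fun _ => 1) s
      = ∑' m : Fin r → ℕ, ((((q ^ f) ^ (w + ∑ i, (m i : ℝ)) : ℝ) : ℂ)
          / rpowC (qn (q ^ f) (w + ∑ i, (m i : ℝ))) s) := by
    simp [multZeta]
  rw [hmz]
  ring
end

section
/- Let q be a real number with 0 < q < 1, let w₁ > 0 and w ≥ 0 be reals, and let u be a complex number with |u| < 1. Then for every integer n ≥ 0, (1−u) · Σ_{m=0}^{∞} u^m · [w + w₁m]_q^{n} = Σ_{l=0}^{n} C(n,l) · [w]_q^{n−l} · q^{w·l} · H_l(u^{−1} : q | w₁); that is, the Euler–Barnes type Daehee q-Euler polynomials satisfy H_n(u^{−1}, w : q | w₁) = Σ_{l=0}^{n} C(n,l) · [w]_q^{n−l} · q^{w·l} · H_l(u^{−1} : q | w₁). -/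
open Finset

/-- The Euler–Barnes type Daehee q-Euler number
`H_l(u⁻¹:q|w₁) = (1-u)·(1-q)^{-l}·Σ_{j=0}^{l} C(l,j)·(-1)^j/(1 - q^{w₁j}·u)`. -/
noncomputable def Hnum (q w1 : ℝ) (u : ℂ) (l : ℕ) : ℂ :=
  (1 - u) * (((1 - q : ℝ) : ℂ)⁻¹) ^ l *
    ∑ j ∈ range (l + 1), (l.choose j : ℂ) * (-1) ^ j
      / (1 - ((q ^ (w1 * (j : ℝ)) : ℝ) : ℂ) * u)

/-- The Euler–Barnes type Daehee q-Euler polynomial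
`H_n(u⁻¹,w:q|w₁) = (1-u)·Σ_{m≥0} u^m·[w+w₁m]_q^n` satisfies
`H_n(u⁻¹,w:q|w₁) = Σ_{l=0}^{n} C(n,l)·[w]_q^{n-l}·q^{w·l}·H_l(u⁻¹:q|w₁)`. -/
theorem daehee_qEuler_polynomial_expansion (q w w1 : ℝ) (hq0 : 0 < q) (hq1 : q < 1)
    (hw : 0 ≤ w) (hw1 : 0 < w1) (u : ℂ) (hu : ‖u‖ < 1) (n : ℕ) :
    (1 - u) * ∑' m : ℕ, u ^ m * ((qn q (w + w1 * (m : ℝ)) ^ n : ℝ) : ℂ)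
      = ∑ l ∈ range (n + 1), (n.choose l : ℂ) * ((qn q w ^ (n - l) : ℝ) : ℂ)
          * ((q ^ (w * (l : ℝ)) : ℝ) : ℂ) * Hnum q w1 u l := by
  have hq1' : (1:ℝ) - q ≠ 0 := by linarith
  set s : ℝ := q ^ w1 with hs
  have hs0 : 0 < s := Real.rpow_pos_of_pos hq0 w1
  have hs1 : s ≤ 1 := Real.rpow_le_one hq0.le hq1.le hw1.le
  set sc : ℂ := ((s : ℝ) : ℂ) with hsc
  set cinv : ℂ := ((1 - q : ℝ) : ℂ)⁻¹ with hcinv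
  set A : ℂ := ((qn q w : ℝ) : ℂ) with hA
  set Qw : ℂ := ((q ^ w : ℝ) : ℂ) with hQw
  set C : ℕ → ℕ → ℂ := fun l j =>
    (n.choose l : ℂ) * A ^ (n - l) * Qw ^ l * cinv ^ l * (l.choose j : ℂ) * (-1) ^ j
    with hC
  have hnorm : ∀ j : ℕ, ‖sc ^ j * u‖ < 1 := by
    intro j
    rw [norm_mul, norm_pow]
    have h1 : ‖sc‖ = s := by
      rw [hsc, Complex.norm_real, Real.norm_eq_abs, abs_of_pos hs0]
    rw [h1]
    calc s ^ j * ‖u‖ ≤ 1 * ‖u‖ := by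
          exact mul_le_mul_of_nonneg_right (pow_le_one₀ hs0.le hs1) (norm_nonneg u)
      _ < 1 := by simpa using hu
  -- pointwise expansion
  have key : ∀ m : ℕ, u ^ m * ((qn q (w + w1 * (m : ℝ)) ^ n : ℝ) : ℂ)
      = ∑ l ∈ range (n + 1), ∑ j ∈ range (l + 1), C l j * (sc ^ j * u) ^ m := by
    intro m
    have hr : qn q (w + w1 * (m : ℝ)) = qn q w + q ^ w * ((1 - q)⁻¹ * (1 - s ^ m)) := by
      have h1 : q ^ (w + w1 * (m : ℝ)) = q ^ w * s ^ m := by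
        rw [Real.rpow_add hq0, hs, ← Real.rpow_natCast (q ^ w1) m, ← Real.rpow_mul hq0.le]
      rw [qn, qn, h1]
      field_simp
      ring
    have hcast : ((qn q (w + w1 * (m : ℝ)) ^ n : ℝ) : ℂ)
        = (Qw * (cinv * (1 - sc ^ m)) + A) ^ n := by
      rw [hr]; push_cast [hA, hQw, hcinv, hsc]; ring
    rw [hcast, add_pow]
    rw [Finset.mul_sum]
    refine Finset.sum_congr rfl fun l _ => ?_
    have hinner : (1 - sc ^ m) ^ l
        = ∑ j ∈ range (l + 1), (l.choose j : ℂ) * (-1) ^ j * (sc ^ j) ^ m := by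
      have h2 : (1 - sc ^ m) = (-(sc ^ m) + 1) := by ring
      rw [h2, add_pow]
      refine Finset.sum_congr rfl fun j _ => ?_
      rw [one_pow, neg_pow, pow_right_comm]
      ring
    simp only [hC, mul_pow, hinner, Finset.mul_sum, Finset.sum_mul]
    refine Finset.sum_congr rfl fun j _ => ?_
    ring
  have hsum : ∀ l j : ℕ, Summable (fun m : ℕ => C l j * (sc ^ j * u) ^ m) := by
    intro l j
    exact Summable.mul_left _ (summable_geometric_of_norm_lt_one (hnorm j))
  have hgeo : ∀ l j : ℕ, ∑' m : ℕ, C l j * (sc ^ j * u) ^ m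
      = C l j * (1 - sc ^ j * u)⁻¹ := by
    intro l j
    rw [tsum_mul_left, tsum_geometric_of_norm_lt_one (hnorm j)]
  have hts : ∑' m : ℕ, u ^ m * ((qn q (w + w1 * (m : ℝ)) ^ n : ℝ) : ℂ)
      = ∑ l ∈ range (n + 1), ∑ j ∈ range (l + 1), C l j * (1 - sc ^ j * u)⁻¹ := by
    rw [tsum_congr key, Summable.tsum_finsetSum (fun l _ => summable_sum fun j _ => hsum l j)]
    refine Finset.sum_congr rfl fun l _ => ?_
    rw [Summable.tsum_finsetSum (fun j _ => hsum l j)]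
    exact Finset.sum_congr rfl fun j _ => hgeo l j
  rw [hts, Finset.mul_sum]
  refine Finset.sum_congr rfl fun l _ => ?_
  rw [Hnum, Finset.mul_sum, Finset.mul_sum, Finset.mul_sum]
  refine Finset.sum_congr rfl fun j _ => ?_
  have hd : ((q ^ (w1 * (j : ℝ)) : ℝ) : ℂ) = sc ^ j := by
    rw [hsc, hs]
    push_cast [Real.rpow_mul hq0.le, Real.rpow_natCast]
    norm_cast
  have hqwl : ((q ^ (w * (l : ℝ)) : ℝ) : ℂ) = Qw ^ l := by
    rw [hQw, Real.rpow_mul hq0.le, Real.rpow_natCast]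
    push_cast
    rfl
  have hA' : ((qn q w ^ (n - l) : ℝ) : ℂ) = A ^ (n - l) := by push_cast [hA]; rfl
  rw [hd, hqwl, hA', hC, div_eq_mul_inv]
  ring
end

section
/- Let q be a real number with 0 < q < 1, let w₁ > 0 and w ≥ 0 be reals, and let u be a complex number with |u| < 1, u ≠ 1. Then for every integer n ≥ 0, the Euler–Barnes type Daehee q-zeta function satisfies ζ_q(−n, w, u | w₁) = (1/(1−u)) · H_n(u^{−1}, w : q | w₁), i.e. Σ_{m=0}^{∞} u^m · [w + w₁m]_q^{n} = (1/(1−u)) · Σ_{l=0}^{n} C(n,l) · [w]_q^{n−l} · q^{w·l} · (1−u)·(1−q)^{−l} · Σ_{j=0}^{l} C(l,j)·(−1)^j / (1 − q^{w₁j}·u). -/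
open Finset

/-- The Euler–Barnes type Daehee q-Euler polynomial
`H_n(u⁻¹,w:q|w₁) = Σ_{l=0}^{n} C(n,l)·[w]_q^{n-l}·q^{w·l}·H_l(u⁻¹:q|w₁)`. -/
noncomputable def Hpoly (q w w1 : ℝ) (u : ℂ) (n : ℕ) : ℂ :=
  ∑ l ∈ range (n + 1), (n.choose l : ℂ) * ((qn q w ^ (n - l) : ℝ) : ℂ)
    * ((q ^ (w * (l : ℝ)) : ℝ) : ℂ) * Hnum q w1 u l

lemma key_swap (x : ℂ) (f : ℕ → ℂ) (n : ℕ) :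
    ∑ l ∈ range (n+1), ∑ j ∈ range (l+1),
      (n.choose l : ℂ) * (l.choose j : ℂ) * (1-x)^(n-l) * x^l * (-1)^j * f j
    = ∑ k ∈ range (n+1), (n.choose k : ℂ) * (-x)^k * f k := by
  rw [Finset.sum_comm' (s' := fun j => Finset.Ico j (n+1)) (t' := range (n+1))
    (fun l j => by simp only [mem_range, Finset.mem_Ico]; omega)]
  refine Finset.sum_congr rfl fun j hj => ?_
  rw [mem_range, Nat.lt_succ_iff] at hj
  rw [Finset.sum_Ico_eq_sum_range]
  have hstep : ∀ i ∈ range (n + 1 - j),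
      (n.choose (j+i) : ℂ) * ((j+i).choose j : ℂ) * (1-x)^(n-(j+i)) * x^(j+i) * (-1)^j * f j
      = ((n.choose j : ℂ) * (-1)^j * x^j * f j) *
          (x^i * (1-x)^(n-j-i) * ((n-j).choose i : ℂ)) := by
    intro i hi
    rw [mem_range] at hi
    have h1 : j + i ≤ n := by omega
    have h2 : j ≤ j + i := Nat.le_add_right j i
    have hc : (n.choose (j+i) : ℂ) * ((j+i).choose j : ℂ)
        = (n.choose j : ℂ) * ((n-j).choose i : ℂ) := by
      have := Nat.choose_mul (n := n) h2
      have h3 : j + i - j = i := by omega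
      rw [h3] at this
      exact_mod_cast congrArg (Nat.cast : ℕ → ℂ) this
    have h4 : n - (j + i) = n - j - i := by omega
    have h5 : x ^ (j + i) = x ^ j * x ^ i := pow_add x j i
    rw [h4, h5]
    calc (n.choose (j+i) : ℂ) * ((j+i).choose j : ℂ) * (1-x)^(n-j-i) * (x ^ j * x ^ i) * (-1)^j * f j
        = ((n.choose (j+i) : ℂ) * ((j+i).choose j : ℂ)) * ((1-x)^(n-j-i) * (x ^ j * x ^ i) * (-1)^j * f j) := by ring
      _ = ((n.choose j : ℂ) * ((n-j).choose i : ℂ)) * ((1-x)^(n-j-i) * (x ^ j * x ^ i) * (-1)^j * f j) := by rw [hc]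
      _ = ((n.choose j : ℂ) * (-1)^j * x^j * f j) * (x^i * (1-x)^(n-j-i) * ((n-j).choose i : ℂ)) := by ring
  rw [Finset.sum_congr rfl hstep, ← Finset.mul_sum]
  have hr : n + 1 - j = n - j + 1 := by omega
  have hone : ∑ i ∈ range (n + 1 - j), x^i * (1-x)^(n-j-i) * ((n-j).choose i : ℂ) = 1 := by
    rw [hr, ← add_pow x (1-x) (n-j)]
    simp
  rw [hone, mul_one]
  ring

/-- The Euler–Barnes type Daehee q-zeta function
`ζ_q(-n,w,u|w₁) = Σ_{m≥0} u^m·[w+w₁m]_q^n` interpolates the Euler–Barnes type Daehee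
q-Euler polynomials: `ζ_q(-n,w,u|w₁) = (1/(1-u))·H_n(u⁻¹,w:q|w₁)`. -/
theorem daehee_qZeta_neg_int (q w w1 : ℝ) (hq0 : 0 < q) (hq1 : q < 1)
    (hw : 0 ≤ w) (hw1 : 0 < w1) (u : ℂ) (hu : ‖u‖ < 1) (hu1 : u ≠ 1) (n : ℕ) :
    ∑' m : ℕ, u ^ m * ((qn q (w + w1 * (m : ℝ)) ^ n : ℝ) : ℂ)
      = (1 / (1 - u)) * Hpoly q w w1 u n := by
  set A : ℂ := ((q ^ w : ℝ) : ℂ) with hA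
  set d : ℂ := ((1 - q : ℝ) : ℂ) with hd
  set B : ℕ → ℝ := fun k => q ^ (w1 * (k : ℝ)) with hBdef
  set f : ℕ → ℂ := fun j => (1 - ((B j : ℝ) : ℂ) * u)⁻¹ with hfdef
  have hu1' : (1 : ℂ) - u ≠ 0 := sub_ne_zero_of_ne (Ne.symm hu1)
  have hBnn : ∀ k : ℕ, 0 ≤ B k := fun k => (Real.rpow_pos_of_pos hq0 _).le
  have hBle : ∀ k : ℕ, B k ≤ 1 := fun k =>
    Real.rpow_le_one hq0.le hq1.le (by positivity)
  have hnorm : ∀ k : ℕ, ‖((B k : ℝ) : ℂ) * u‖ < 1 := by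
    intro k
    rw [norm_mul, Complex.norm_real, Real.norm_of_nonneg (hBnn k)]
    calc B k * ‖u‖ ≤ 1 * ‖u‖ := by
          have : (0:ℝ) ≤ ‖u‖ := norm_nonneg u
          nlinarith [hBle k]
      _ = ‖u‖ := one_mul _
      _ < 1 := by exact hu
  have hBB : ∀ m k : ℕ, (B m) ^ k = (B k) ^ m := by
    intro m k
    rw [hBdef]
    simp only
    rw [← Real.rpow_natCast (q ^ (w1 * (m:ℝ))) k, ← Real.rpow_mul hq0.le,
        ← Real.rpow_natCast (q ^ (w1 * (k:ℝ))) m, ← Real.rpow_mul hq0.le]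
    ring_nf
  -- termwise rewriting of the series
  have hterm : ∀ m : ℕ, u ^ m * ((qn q (w + w1 * (m : ℝ)) ^ n : ℝ) : ℂ)
      = ∑ k ∈ range (n + 1),
          ((n.choose k : ℂ) * (-A) ^ k * (d⁻¹) ^ n) * (((B k : ℝ) : ℂ) * u) ^ m := by
    intro m
    have hsplit : q ^ (w + w1 * (m : ℝ)) = q ^ w * B m := Real.rpow_add hq0 _ _
    have hbin : ((1 : ℂ) - A * ((B m : ℝ) : ℂ)) ^ n
        = ∑ k ∈ range (n + 1), (-(A * ((B m : ℝ) : ℂ))) ^ k * (n.choose k : ℂ) := by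
      have h := add_pow (-(A * ((B m : ℝ) : ℂ))) 1 n
      simpa [neg_add_eq_sub] using h
    rw [qn, hsplit]
    rw [Complex.ofReal_pow, Complex.ofReal_div, Complex.ofReal_sub, Complex.ofReal_mul,
        Complex.ofReal_one, ← hA, ← hd, div_pow, hbin, Finset.sum_div, Finset.mul_sum]
    refine Finset.sum_congr rfl fun k hk => ?_
    have hBm : (((B m : ℝ) : ℂ)) ^ k = (((B k : ℝ) : ℂ)) ^ m := by
      rw [← Complex.ofReal_pow, ← Complex.ofReal_pow, hBB]
    have hdpow : (d : ℂ) ^ n ≠ 0 ∨ True := Or.inr trivial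
    rw [div_eq_mul_inv, ← inv_pow]
    calc u ^ m * ((-(A * ((B m : ℝ) : ℂ))) ^ k * (n.choose k : ℂ) * (d⁻¹) ^ n)
        = (n.choose k : ℂ) * (-A) ^ k * (d⁻¹) ^ n * ((((B m : ℝ) : ℂ)) ^ k * u ^ m) := by
          rw [neg_mul_eq_neg_mul, mul_pow]; ring
      _ = (n.choose k : ℂ) * (-A) ^ k * (d⁻¹) ^ n * (((B k : ℝ) : ℂ) * u) ^ m := by
          rw [hBm, mul_pow]
  -- sum the geometric series
  have hL : ∑' m : ℕ, u ^ m * ((qn q (w + w1 * (m : ℝ)) ^ n : ℝ) : ℂ)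
      = ∑ k ∈ range (n + 1), (n.choose k : ℂ) * (-A) ^ k * (d⁻¹) ^ n * f k := by
    rw [tsum_congr hterm, Summable.tsum_finsetSum (fun k _ =>
      ((summable_geometric_of_norm_lt_one (hnorm k)).mul_left _))]
    refine Finset.sum_congr rfl fun k hk => ?_
    rw [tsum_mul_left, tsum_geometric_of_norm_lt_one (hnorm k)]
  rw [hL]
  -- now compute the right-hand side
  have hAl : ∀ l : ℕ, ((q ^ (w * (l : ℝ)) : ℝ) : ℂ) = A ^ l := by
    intro l
    rw [hA, ← Complex.ofReal_pow]
    congr 1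
    rw [← Real.rpow_natCast (q ^ w) l, ← Real.rpow_mul hq0.le]
  have hqnw : ((qn q w : ℝ) : ℂ) = (1 - A) * d⁻¹ := by
    rw [qn, Complex.ofReal_div, Complex.ofReal_sub, Complex.ofReal_one, ← hA, ← hd,
        div_eq_mul_inv]
  have hR : (1 / (1 - u)) * Hpoly q w w1 u n
      = ∑ l ∈ range (n + 1), ∑ j ∈ range (l + 1),
          (d⁻¹) ^ n * ((n.choose l : ℂ) * (l.choose j : ℂ) * (1 - A) ^ (n - l)
            * A ^ l * (-1) ^ j * f j) := by
    rw [Hpoly, Finset.mul_sum]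
    refine Finset.sum_congr rfl fun l hl => ?_
    rw [mem_range, Nat.lt_succ_iff] at hl
    have hcast : ((qn q w ^ (n - l) : ℝ) : ℂ) = ((1 - A) * d⁻¹) ^ (n - l) := by
      rw [Complex.ofReal_pow, hqnw]
    rw [Hnum, hAl, hcast, ← hd]
    have hdp : (d⁻¹) ^ (n - l) * (d⁻¹) ^ l = (d⁻¹) ^ n := by
      rw [← pow_add, Nat.sub_add_cancel hl]
    have hc1 : (1 / (1 - u)) * (1 - u) = 1 := by
      field_simp
    set S : ℂ := ∑ j ∈ range (l + 1), (l.choose j : ℂ) * (-1) ^ j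
        / (1 - ((q ^ (w1 * (j : ℝ)) : ℝ) : ℂ) * u) with hS
    calc 1 / (1 - u) * ((n.choose l : ℂ) * ((1 - A) * d⁻¹) ^ (n - l) * A ^ l
            * ((1 - u) * (d⁻¹) ^ l * S))
        = (1 / (1 - u) * (1 - u)) * ((d⁻¹) ^ (n - l) * (d⁻¹) ^ l)
            * ((n.choose l : ℂ) * (1 - A) ^ (n - l) * A ^ l) * S := by
          rw [mul_pow]; ring
      _ = ((d⁻¹) ^ n * ((n.choose l : ℂ) * (1 - A) ^ (n - l) * A ^ l)) * S := by
          rw [hc1, hdp]; ring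
      _ = ∑ j ∈ range (l + 1), (d⁻¹) ^ n * ((n.choose l : ℂ) * (l.choose j : ℂ)
            * (1 - A) ^ (n - l) * A ^ l * (-1) ^ j * f j) := by
          rw [hS, Finset.mul_sum]
          refine Finset.sum_congr rfl fun j hj => ?_
          have hfj : f j = (1 - ((q ^ (w1 * (j : ℝ)) : ℝ) : ℂ) * u)⁻¹ := rfl
          rw [hfj, div_eq_mul_inv]
          ring
  rw [hR]
  simp only [← Finset.mul_sum]
  rw [key_swap A f n, Finset.mul_sum]
  refine Finset.sum_congr rfl fun k hk => ?_
  ring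
end

section
/- Let q be a real number with 0 < q < 1, let r ≥ 1 be an integer, let w ≥ 0 and w₁,…,w_r > 0 be reals, and let u be a complex number with |u| < 1, u ≠ 1. Then for every integer n ≥ 0, the Euler–Barnes type multiple Daehee q-zeta function satisfies ζ_q(−n, w, u | w₁,…,w_r) = (1−u)^{−r} · H^{(r)}_n(u^{−1}, w : q | w₁,…,w_r), i.e. Σ_{n₁,…,n_r ≥ 0} u^{n₁+…+n_r} · [w + Σ_{i=1}^{r} w_i n_i]_q^{n} = (1−q)^{−n} · Σ_{l=0}^{n} C(n,l)·(−1)^l·q^{l·w} · Π_{i=1}^{r} (1 − u·q^{l·w_i})^{−1}. -/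
open Finset

lemma rpowSum {q : ℝ} (hq : 0 < q) {ι : Type*} (s : Finset ι) (f : ι → ℝ) :
    q ^ (∑ i ∈ s, f i) = ∏ i ∈ s, q ^ f i := by
  classical
  induction s using Finset.induction with
  | empty => simp
  | insert _ _ h ih => rw [Finset.sum_insert h, Finset.prod_insert h, Real.rpow_add hq, ih]

lemma piTsum (r : ℕ) (g : Fin r → ℕ → ℂ) (hg : ∀ i, Summable fun k => ‖g i k‖) :
    Summable (fun f : Fin r → ℕ => ‖∏ i, g i (f i)‖) ∧
      ∑' f : Fin r → ℕ, ∏ i, g i (f i) = ∏ i, ∑' k, g i k := by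
  induction r with
  | zero =>
      constructor
      · exact Summable.of_finite
      · simp
  | succ r ih =>
      obtain ⟨hS, hE⟩ := ih (fun i => g i.succ) (fun i => hg i.succ)
      set e : ℕ × (Fin r → ℕ) ≃ (Fin (r + 1) → ℕ) := Fin.consEquiv (fun _ => ℕ) with he
      have hrw : ∀ p : ℕ × (Fin r → ℕ),
          (∏ i, g i (e p i)) = g 0 p.1 * ∏ i : Fin r, g i.succ (p.2 i) := by
        intro p
        rw [Fin.prod_univ_succ]
        simp [he, Fin.consEquiv]
      have hsum2 : Summable (fun p : ℕ × (Fin r → ℕ) =>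
          ‖g 0 p.1‖ * ‖∏ i : Fin r, g i.succ (p.2 i)‖) := by
        apply Summable.mul_of_nonneg (hg 0) hS
        · exact fun k => norm_nonneg _
        · exact fun f => norm_nonneg _
      constructor
      · rw [← e.summable_iff]
        refine hsum2.congr fun p => ?_
        simp only [Function.comp, hrw p, norm_mul]
      · rw [← e.tsum_eq, tsum_congr hrw, Fin.prod_univ_succ, ← hE,
          tsum_mul_tsum_of_summable_norm (hg 0) hS]


/-- The Euler–Barnes type multiple Daehee q-Euler polynomial
`H^{(r)}_n(u⁻¹,w:q|w₁,…,w_r) = (1-u)^r·(1-q)^{-n}·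
  Σ_{l=0}^{n} C(n,l)·(-1)^l·q^{l·w}·Π_{i=1}^{r} (1 - u·q^{l·wᵢ})⁻¹`. -/
noncomputable def multH (q : ℝ) (r : ℕ) (w : ℝ) (ws : Fin r → ℝ) (u : ℂ) (n : ℕ) : ℂ :=
  (1 - u) ^ r * (((1 - q : ℝ) : ℂ)⁻¹) ^ n *
    ∑ l ∈ range (n + 1), (n.choose l : ℂ) * (-1) ^ l * ((q ^ ((l : ℝ) * w) : ℝ) : ℂ)
      * ∏ i, (1 - u * ((q ^ ((l : ℝ) * ws i) : ℝ) : ℂ))⁻¹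

/-- The Euler–Barnes type multiple Daehee q-zeta function
`ζ_q(-n,w,u|w₁,…,w_r) = Σ_{n₁,…,n_r ≥ 0} u^{n₁+…+n_r}·[w+Σ wᵢnᵢ]_q^n` interpolates the
Euler–Barnes type multiple Daehee q-Euler polynomials:
`ζ_q(-n,w,u|w₁,…,w_r) = (1-u)^{-r}·H^{(r)}_n(u⁻¹,w:q|w₁,…,w_r)`. -/
theorem multiple_daehee_qZeta_neg_int (q : ℝ) (hq0 : 0 < q) (hq1 : q < 1)
    (r : ℕ) (hr : 1 ≤ r) (w : ℝ) (hw : 0 ≤ w) (ws : Fin r → ℝ) (hws : ∀ i, 0 < ws i)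
    (u : ℂ) (hu : ‖u‖ < 1) (hu1 : u ≠ 1) (n : ℕ) :
    ∑' ν : Fin r → ℕ, u ^ (∑ i, ν i)
        * ((qn q (w + ∑ i, ws i * (ν i : ℝ)) ^ n : ℝ) : ℂ)
      = ((1 - u) ^ r)⁻¹ * multH q r w ws u n := by
  -- the per-index base of the geometric series
  set x : ℕ → Fin r → ℂ := fun l i => u * ((q ^ ((l : ℝ) * ws i) : ℝ) : ℂ) with hxdef
  -- the scalar coefficient
  set c : ℕ → ℂ := fun l => (((1 - q : ℝ) : ℂ)⁻¹) ^ n * (n.choose l : ℂ) * (-1) ^ l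
      * ((q ^ ((l : ℝ) * w) : ℝ) : ℂ) with hcdef
  have hxlt : ∀ l i, ‖x l i‖ < 1 := by
    intro l i
    have hple : q ^ ((l : ℝ) * ws i) ≤ 1 :=
      Real.rpow_le_one hq0.le hq1.le (mul_nonneg (Nat.cast_nonneg l) (hws i).le)
    have hppos : 0 < q ^ ((l : ℝ) * ws i) := Real.rpow_pos_of_pos hq0 _
    calc ‖x l i‖ = ‖u‖ * |q ^ ((l : ℝ) * ws i)| := by
          rw [hxdef]; simp [Complex.norm_real]
      _ = ‖u‖ * q ^ ((l : ℝ) * ws i) := by rw [abs_of_pos hppos]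
      _ ≤ ‖u‖ * 1 := by
          exact mul_le_mul_of_nonneg_left hple (norm_nonneg u)
      _ = ‖u‖ := mul_one _
      _ < 1 := hu
  have hgsum : ∀ l i, Summable fun k : ℕ => ‖x l i ^ k‖ := by
    intro l i
    refine (summable_geometric_of_lt_one (norm_nonneg (x l i)) (hxlt l i)).congr fun k => ?_
    rw [norm_pow]
  have hpi : ∀ l, Summable (fun f : Fin r → ℕ => ‖∏ i, x l i ^ f i‖) ∧
      ∑' f : Fin r → ℕ, ∏ i, x l i ^ f i = ∏ i, ∑' k, x l i ^ k :=
    fun l => piTsum r (fun i k => x l i ^ k) (hgsum l)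
  -- key pointwise identity
  have key : ∀ ν : Fin r → ℕ, u ^ (∑ i, ν i)
      * ((qn q (w + ∑ i, ws i * (ν i : ℝ)) ^ n : ℝ) : ℂ)
      = ∑ l ∈ range (n + 1), c l * ∏ i, x l i ^ ν i := by
    intro ν
    set z : ℝ := w + ∑ i, ws i * (ν i : ℝ) with hzdef
    have hreal : ∀ l : ℕ, (q ^ z) ^ l
        = q ^ ((l : ℝ) * w) * ∏ i, (q ^ ((l : ℝ) * ws i)) ^ (ν i) := by
      intro l
      have h1 : ∀ i : Fin r, (q ^ ((l : ℝ) * ws i)) ^ (ν i)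
          = q ^ ((l : ℝ) * (ws i * (ν i : ℝ))) := by
        intro i
        rw [← Real.rpow_natCast (q ^ ((l : ℝ) * ws i)) (ν i), ← Real.rpow_mul hq0.le,
          mul_assoc]
      calc (q ^ z) ^ l = q ^ (z * (l : ℝ)) := by
            rw [← Real.rpow_natCast (q ^ z) l, ← Real.rpow_mul hq0.le]
        _ = q ^ ((l : ℝ) * w + ∑ i, (l : ℝ) * (ws i * (ν i : ℝ))) := by
            rw [hzdef, mul_comm, mul_add, Finset.mul_sum]
        _ = q ^ ((l : ℝ) * w) * ∏ i, q ^ ((l : ℝ) * (ws i * (ν i : ℝ))) := by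
            rw [Real.rpow_add hq0, rpowSum hq0]
        _ = q ^ ((l : ℝ) * w) * ∏ i, (q ^ ((l : ℝ) * ws i)) ^ (ν i) := by
            rw [Finset.prod_congr rfl fun i _ => (h1 i).symm]
    have hq1' : ((1 - q : ℝ) : ℂ) ≠ 0 := by
      norm_cast
      exact sub_ne_zero_of_ne (ne_of_lt hq1).symm
    have hpow : ((qn q z ^ n : ℝ) : ℂ)
        = (1 - ((q ^ z : ℝ) : ℂ)) ^ n * (((1 - q : ℝ) : ℂ)⁻¹) ^ n := by
      rw [qn]
      push_cast
      rw [div_pow, div_eq_mul_inv, ← inv_pow]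
    rw [hpow]
    rw [show (1 - ((q ^ z : ℝ) : ℂ)) = -((q ^ z : ℝ) : ℂ) + 1 by ring, add_pow]
    rw [Finset.sum_mul, Finset.mul_sum]
    refine Finset.sum_congr rfl fun l hl => ?_
    have ht : ((-((q ^ z : ℝ) : ℂ)) ^ l)
        = (-1) ^ l * ((q ^ ((l : ℝ) * w) : ℝ) : ℂ)
            * ∏ i, ((q ^ ((l : ℝ) * ws i) : ℝ) : ℂ) ^ ν i := by
      rw [neg_pow, ← Complex.ofReal_pow, hreal l]
      push_cast
      ring
    have hus : u ^ (∑ i, ν i) = ∏ i, u ^ ν i := (Finset.prod_pow_eq_pow_sum _ _ _).symm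
    rw [ht, hus, hcdef, hxdef]
    have hprod : (∏ i : Fin r, u ^ ν i)
        * ∏ i : Fin r, ((q ^ ((l : ℝ) * ws i) : ℝ) : ℂ) ^ ν i
        = ∏ i : Fin r, (u * ((q ^ ((l : ℝ) * ws i) : ℝ) : ℂ)) ^ ν i := by
      rw [← Finset.prod_mul_distrib]
      exact Finset.prod_congr rfl fun i _ => (mul_pow _ _ _).symm
    rw [← hprod]
    ring
  -- summability of each l-term
  have hsuml : ∀ l ∈ range (n + 1),
      Summable (fun ν : Fin r → ℕ => c l * ∏ i, x l i ^ ν i) := by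
    intro l _
    exact ((hpi l).1.of_norm).mul_left (c l)
  rw [tsum_congr key, Summable.tsum_finsetSum hsuml]
  have hgeo : ∀ l (i : Fin r), ∑' k : ℕ, x l i ^ k = (1 - x l i)⁻¹ :=
    fun l i => tsum_geometric_of_norm_lt_one (hxlt l i)
  have hterm : ∀ l ∈ range (n + 1),
      ∑' ν : Fin r → ℕ, c l * ∏ i, x l i ^ ν i = c l * ∏ i, (1 - x l i)⁻¹ := by
    intro l _
    rw [tsum_mul_left, (hpi l).2, Finset.prod_congr rfl fun i _ => hgeo l i]
  rw [Finset.sum_congr rfl hterm]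
  -- put the right-hand side in matching shape
  have h1u : ((1 - u) ^ r : ℂ) ≠ 0 := pow_ne_zero _ (sub_ne_zero_of_ne (Ne.symm hu1))
  rw [multH, ← mul_assoc, ← mul_assoc, inv_mul_cancel₀ h1u, one_mul, Finset.mul_sum]
  refine Finset.sum_congr rfl fun l _ => ?_
  rw [hcdef, hxdef]
  ring
end

section
/- Let q be a real number with 0 < q < 1. Then for all integers k ≥ 1 and n ≥ 1, the q-power sum W_{k,q} is given by q-Bernoulli polynomials: Σ_{a=0}^{n−1} q^a · [a]_q^{k} = ( β_{k+1}(n:q) − β_{k+1}(q) ) / (k+1). -/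
open Finset

/-- The q-power sums are given by q-Bernoulli polynomials:
`Σ_{a=0}^{n-1} q^a·[a]_q^k = (β_{k+1}(n:q) - β_{k+1}(q))/(k+1)`. -/
theorem q_power_sum (q : ℝ) (hq0 : 0 < q) (hq1 : q < 1)
    (k n : ℕ) (hk : 1 ≤ k) (hn : 1 ≤ n) :
    ∑ a ∈ range n, q ^ (a : ℝ) * qn q (a : ℝ) ^ k
      = (qB q (n : ℝ) (k + 1) - qB q 0 (k + 1)) / ((k : ℝ) + 1) := by
  have h1q : (0:ℝ) < 1 - q := by linarith
  set f : ℕ → ℝ := fun m => q ^ ((m:ℕ):ℝ) * qn q ((m:ℕ):ℝ) ^ k with hf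
  have hrpow : ∀ m : ℕ, q ^ ((m:ℕ):ℝ) = q ^ m := fun m => Real.rpow_natCast q m
  have hqn_nonneg : ∀ m : ℕ, 0 ≤ qn q ((m:ℕ):ℝ) := by
    intro m
    unfold qn
    rw [hrpow]
    have : q ^ m ≤ 1 := pow_le_one₀ hq0.le hq1.le
    apply div_nonneg (by linarith) h1q.le
  have hqn_le : ∀ m : ℕ, qn q ((m:ℕ):ℝ) ≤ (1 - q)⁻¹ := by
    intro m
    unfold qn
    rw [hrpow, div_le_iff₀ h1q]
    have h2 : 0 ≤ q ^ m := by positivity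
    rw [inv_mul_cancel₀ h1q.ne']
    linarith
  have hsum : Summable f := by
    have hg : Summable (fun m : ℕ => (1 - q)⁻¹ ^ k * q ^ m) :=
      (summable_geometric_of_lt_one hq0.le hq1).mul_left _
    refine Summable.of_nonneg_of_le (fun m => ?_) (fun m => ?_) hg
    · 
      have h1 : (0:ℝ) ≤ q ^ ((m:ℕ):ℝ) := by rw [hrpow]; positivity
      exact mul_nonneg h1 (pow_nonneg (hqn_nonneg m) k)
    · simp only [hf]
      rw [hrpow, mul_comm]
      gcongr
      · exact hqn_nonneg m
      · exact hqn_le m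
  have hshiftsum : Summable (fun m => f (m + n)) := hsum.comp_injective fun a b => by omega
  have hkey : ∑ a ∈ range n, f a + ∑' m : ℕ, f (m + n) = ∑' m : ℕ, f m :=
    Summable.sum_add_tsum_nat_add n hsum
  have hT1 : (∑' m : ℕ, q ^ ((m:ℝ) + (n:ℝ)) * qn q ((m:ℝ) + (n:ℝ)) ^ k)
      = ∑' m : ℕ, f (m + n) := by
    apply tsum_congr
    intro m
    simp only [hf]
    push_cast
    ring_nf
  have hT0 : (∑' m : ℕ, q ^ ((m:ℝ) + 0) * qn q ((m:ℝ) + 0) ^ k) = ∑' m : ℕ, f m := by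
    apply tsum_congr
    intro m
    simp [hf]
  have hkpos : (0:ℝ) < (k:ℝ) + 1 := by positivity
  show ∑ a ∈ range n, f a = _
  simp only [qB, hT1, hT0]
  have hs : ∑ a ∈ range n, f a = (∑' m : ℕ, f m) - ∑' m : ℕ, f (m + n) := by linarith
  rw [hs]
  field_simp
  ring
end

section
/- Let q be a real number with 0 < q < 1, let n ≥ 1 be an integer and x > 0 a real number. Then for every complex number s, the double q-zeta function satisfies the distribution relation [n]_q^{−s} · Σ_{m=0}^{n−1} Σ_{k=0}^{n−1} ζ_{q^n,2}( s , x + (k+m)/n ) = ζ_{q,2}(s, n·x), where on the left the double q-zeta function is formed with q replaced by q^n. -/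
open Finset

lemma qn_pos {q : ℝ} (hq0 : 0 < q) (hq1 : q < 1) {z : ℝ} (hz : 0 < z) : 0 < qn q z := by
  have h1 : q ^ z < 1 := Real.rpow_lt_one hq0.le hq1 hz
  exact div_pos (by linarith) (by linarith)

lemma qn_le_qn {q : ℝ} (hq0 : 0 < q) (hq1 : q < 1) {z w : ℝ} (h : z ≤ w) : qn q z ≤ qn q w := by
  unfold qn
  have h2 : (0:ℝ) < 1 - q := by linarith
  have h3 : q ^ w ≤ q ^ z := Real.rpow_le_rpow_of_exponent_ge hq0 hq1.le h
  exact (div_le_div_iff_of_pos_right h2).mpr (by linarith)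

lemma qn_le_inv {q : ℝ} (hq0 : 0 < q) (hq1 : q < 1) (z : ℝ) : qn q z ≤ 1 / (1 - q) := by
  unfold qn
  have h2 : (0:ℝ) < 1 - q := by linarith
  have h3 : (0:ℝ) ≤ q ^ z := Real.rpow_nonneg hq0.le z
  exact (div_le_div_iff_of_pos_right h2).mpr (by linarith)

lemma rpowC_mul {a b : ℝ} (ha : 0 < a) (hb : 0 < b) (s : ℂ) :
    rpowC (a * b) s = rpowC a s * rpowC b s := by
  unfold rpowC
  rw [Real.log_mul ha.ne' hb.ne', ← Complex.exp_add]
  push_cast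
  ring_nf

lemma rpowC_neg_mul (r : ℝ) (s : ℂ) : rpowC r (-s) * rpowC r s = 1 := by
  unfold rpowC
  rw [← Complex.exp_add, neg_mul, neg_add_cancel, Complex.exp_zero]

lemma qn_mul {q : ℝ} (hq0 : 0 < q) (hq1 : q < 1) {n : ℕ} (hn : 1 ≤ n) (z : ℝ) :
    qn q ((n : ℝ) * z) = qn q (n : ℝ) * qn (q ^ n) z := by
  have hqn1 : q ^ n < 1 := pow_lt_one₀ hq0.le hq1 (by omega)
  have h1 : (q ^ n : ℝ) ^ z = q ^ ((n:ℝ) * z) := by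
    rw [← Real.rpow_natCast q n, ← Real.rpow_mul hq0.le]
  unfold qn
  rw [h1, Real.rpow_natCast]
  have h2 : (1:ℝ) - q ≠ 0 := by linarith
  have h3 : (1:ℝ) - q ^ n ≠ 0 := by linarith
  field_simp

def mulAddEquiv (n : ℕ) (hn : 0 < n) : ((Fin n × Fin n) × (ℕ × ℕ)) ≃ (ℕ × ℕ) where
  toFun y := (n * y.2.1 + (y.1.2 : ℕ), n * y.2.2 + (y.1.1 : ℕ))
  invFun p := ((⟨p.2 % n, Nat.mod_lt _ hn⟩, ⟨p.1 % n, Nat.mod_lt _ hn⟩), (p.1 / n, p.2 / n))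
  left_inv := by
    rintro ⟨⟨⟨m, hm⟩, ⟨k, hk⟩⟩, p1, p2⟩
    simp [Nat.mul_add_mod, Nat.mod_eq_of_lt hm, Nat.mod_eq_of_lt hk,
      Nat.mul_add_div hn, Nat.div_eq_of_lt hm, Nat.div_eq_of_lt hk]
  right_inv := by
    rintro ⟨a, b⟩
    simp [Nat.div_add_mod]
/-- The double q-zeta function (with base `Q`)
`ζ_{Q,2}(s,x) = Σ_{n₁,n₂ ≥ 0} Q^{n₁+n₂+x}/[n₁+n₂+x]_Q^s`. -/
noncomputable def zeta2 (Q : ℝ) (s : ℂ) (x : ℝ) : ℂ :=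
  ∑' p : ℕ × ℕ, ((Q ^ ((p.1 : ℝ) + (p.2 : ℝ) + x) : ℝ) : ℂ)
    / rpowC (qn Q ((p.1 : ℝ) + (p.2 : ℝ) + x)) s

set_option maxHeartbeats 1000000 in
/-- Distribution relation for the double q-zeta function:
`[n]_q^{-s}·Σ_{m=0}^{n-1} Σ_{k=0}^{n-1} ζ_{q^n,2}(s, x+(k+m)/n) = ζ_{q,2}(s, n·x)`. -/
theorem zeta2_distribution (q : ℝ) (hq0 : 0 < q) (hq1 : q < 1)
    (n : ℕ) (hn : 1 ≤ n) (x : ℝ) (hx : 0 < x) (s : ℂ) :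
    rpowC (qn q (n : ℝ)) (-s)
        * ∑ m ∈ range n, ∑ k ∈ range n, zeta2 (q ^ n) s (x + ((k : ℝ) + (m : ℝ)) / (n : ℝ))
      = zeta2 q s ((n : ℝ) * x) := by
  have hn0 : 0 < n := hn
  have hnR : (0:ℝ) < n := Nat.cast_pos.mpr hn0
  have hQ0 : 0 < q ^ n := pow_pos hq0 n
  have hQ1 : q ^ n < 1 := pow_lt_one₀ hq0.le hq1 (by omega)
  set f : ℕ × ℕ → ℂ := fun p =>
    ((q ^ ((p.1 : ℝ) + (p.2 : ℝ) + (n:ℝ) * x) : ℝ) : ℂ)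
      / rpowC (qn q ((p.1 : ℝ) + (p.2 : ℝ) + (n:ℝ) * x)) s with hf
  have hqnpos : 0 < qn q (n:ℝ) := qn_pos hq0 hq1 hnR
  -- Summability of f
  have hsum : Summable f := by
    have hb : (0:ℝ) < 1 - q := by linarith
    set a : ℝ := qn q ((n:ℝ)*x) with ha
    have ha0 : 0 < a := qn_pos hq0 hq1 (by positivity)
    set M : ℝ := max |Real.log a| |Real.log (1/(1-q))| with hM
    set C : ℝ := Real.exp (|s.re| * M) with hC
    apply Summable.of_norm_bounded (g := fun p : ℕ×ℕ => (C * q ^ ((n:ℝ)*x)) * (q ^ p.1 * q ^ p.2))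
    · exact (((summable_geometric_of_lt_one hq0.le hq1).mul_of_nonneg
        (summable_geometric_of_lt_one hq0.le hq1) (fun i => by positivity)
        (fun i => by positivity))).mul_left _
    · intro p
      set θ : ℝ := (p.1:ℝ)+(p.2:ℝ)+(n:ℝ)*x with hθdef
      have hθ : 0 < θ := by positivity
      set r : ℝ := qn q θ with hr
      have hr0 : 0 < r := qn_pos hq0 hq1 hθ
      have hra : a ≤ r := qn_le_qn hq0 hq1 (by
        have h1 : (0:ℝ) ≤ (p.1:ℝ) := Nat.cast_nonneg _
        have h2 : (0:ℝ) ≤ (p.2:ℝ) := Nat.cast_nonneg _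
        rw [hθdef]; linarith)
      have hrb : r ≤ 1/(1-q) := qn_le_inv hq0 hq1 θ
      have hlog : |Real.log r| ≤ M := by
        rw [abs_le]
        constructor
        · have h1 : Real.log a ≤ Real.log r := Real.log_le_log ha0 hra
          have h2 : -|Real.log a| ≤ Real.log a := neg_abs_le _
          have h3 : |Real.log a| ≤ M := le_max_left _ _
          linarith
        · have h1 : Real.log r ≤ Real.log (1/(1-q)) := Real.log_le_log hr0 hrb
          have h2 : Real.log (1/(1-q)) ≤ |Real.log (1/(1-q))| := le_abs_self _
          have h3 : |Real.log (1/(1-q))| ≤ M := le_max_right _ _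
          linarith
      have hnorm : ‖f p‖ = q ^ θ / Real.exp (s.re * Real.log r) := by
        simp only [hf, norm_div, Complex.norm_real, Real.norm_eq_abs,
          abs_of_nonneg (Real.rpow_nonneg hq0.le θ)]
        congr 1
        · exact abs_of_nonneg (Real.rpow_nonneg hq0.le _)
        rw [rpowC, Complex.norm_exp]
        congr 1
        simp [Complex.mul_re, hr, hθdef]
      have hq' : q ^ θ = q ^ (p.1:ℕ) * q ^ (p.2:ℕ) * q ^ ((n:ℝ)*x) := by
        rw [hθdef, Real.rpow_add hq0, Real.rpow_add hq0, Real.rpow_natCast, Real.rpow_natCast]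
      calc ‖f p‖ = q ^ θ / Real.exp (s.re * Real.log r) := hnorm
        _ = q ^ θ * Real.exp (-(s.re * Real.log r)) := by
            rw [Real.exp_neg, div_eq_mul_inv]
        _ ≤ q ^ θ * C := by
            apply mul_le_mul_of_nonneg_left _ (Real.rpow_nonneg hq0.le θ)
            rw [hC]
            apply Real.exp_le_exp.mpr
            calc -(s.re * Real.log r) ≤ |s.re * Real.log r| := neg_le_abs _
              _ = |s.re| * |Real.log r| := abs_mul _ _
              _ ≤ |s.re| * M := mul_le_mul_of_nonneg_left hlog (abs_nonneg _)
        _ = (C * q ^ ((n:ℝ)*x)) * (q ^ p.1 * q ^ p.2) := by rw [hq']; ring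
  -- per-term identity
  have key : ∀ k, k < n → ∀ m, m < n → ∀ p : ℕ × ℕ,
      ((((q ^ n : ℝ) ^ ((p.1:ℝ)+(p.2:ℝ)+(x+((k:ℝ)+(m:ℝ))/(n:ℝ))) : ℝ)) : ℂ)
        / rpowC (qn (q ^ n) ((p.1:ℝ)+(p.2:ℝ)+(x+((k:ℝ)+(m:ℝ))/(n:ℝ)))) s
      = rpowC (qn q (n:ℝ)) s * f (n * p.1 + k, n * p.2 + m) := by
    intro k hk m hm p
    set z : ℝ := (p.1:ℝ)+(p.2:ℝ)+(x+((k:ℝ)+(m:ℝ))/(n:ℝ)) with hz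
    have hzpos : 0 < z := by positivity
    have harg : ((n*p.1+k : ℕ):ℝ) + ((n*p.2+m : ℕ):ℝ) + (n:ℝ)*x = (n:ℝ) * z := by
      rw [hz]; push_cast; field_simp; ring
    have hQz : ((q ^ n : ℝ)) ^ z = q ^ ((n:ℝ) * z) := by
      rw [← Real.rpow_natCast q n, ← Real.rpow_mul hq0.le]
    have hA : rpowC (qn q (n:ℝ)) s ≠ 0 := Complex.exp_ne_zero _
    have hB : rpowC (qn (q^n) z) s ≠ 0 := Complex.exp_ne_zero _
    simp only [hf]
    rw [harg, hQz, qn_mul hq0 hq1 hn z,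
      rpowC_mul hqnpos (qn_pos hQ0 hQ1 hzpos) s]
    field_simp
  -- per-(k,m) tsum identity
  have key2 : ∀ k, k < n → ∀ m, m < n →
      zeta2 (q ^ n) s (x + ((k:ℝ)+(m:ℝ))/(n:ℝ))
        = rpowC (qn q (n:ℝ)) s * ∑' p : ℕ × ℕ, f (n * p.1 + k, n * p.2 + m) := by
    intro k hk m hm
    unfold zeta2
    rw [tsum_congr (fun p => key k hk m hm p), tsum_mul_left]
  -- rewrite LHS
  have step1 : rpowC (qn q (n : ℝ)) (-s)
        * ∑ m ∈ range n, ∑ k ∈ range n, zeta2 (q^n) s (x + ((k : ℝ) + (m : ℝ)) / (n : ℝ))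
      = ∑ m ∈ range n, ∑ k ∈ range n, ∑' p : ℕ × ℕ, f (n * p.1 + k, n * p.2 + m) := by
    rw [Finset.sum_congr rfl (fun m hm => Finset.sum_congr rfl
      (fun k hk => key2 k (mem_range.mp hk) m (mem_range.mp hm)))]
    simp only [← Finset.mul_sum]
    rw [← mul_assoc, rpowC_neg_mul, one_mul]
  rw [step1]
  -- reindex
  set e := mulAddEquiv n hn0 with he
  have hsum' : Summable fun y => f (e y) := (e.summable_iff).mpr hsum
  have hinner : ∀ km : Fin n × Fin n, Summable fun p : ℕ × ℕ => f (e (km, p)) := by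
    intro km
    apply hsum.comp_injective
    intro p p' h
    simpa using congrArg Prod.snd (e.injective h)
  have main : (∑ m ∈ range n, ∑ k ∈ range n,
        ∑' p : ℕ × ℕ, f (n * p.1 + k, n * p.2 + m)) = ∑' p, f p := by
    calc ∑ m ∈ range n, ∑ k ∈ range n, ∑' p : ℕ × ℕ, f (n * p.1 + k, n * p.2 + m)
        = ∑ m : Fin n, ∑ k : Fin n, ∑' p : ℕ × ℕ, f (n * p.1 + (k:ℕ), n * p.2 + (m:ℕ)) := by
          rw [← Fin.sum_univ_eq_sum_range (fun m => ∑ k ∈ range n,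
            ∑' p : ℕ × ℕ, f (n * p.1 + k, n * p.2 + m)) n]
          refine Finset.sum_congr rfl (fun m _ => ?_)
          rw [← Fin.sum_univ_eq_sum_range (fun k =>
            ∑' p : ℕ × ℕ, f (n * p.1 + k, n * p.2 + (m:ℕ))) n]
      _ = ∑ km : Fin n × Fin n, ∑' p : ℕ × ℕ, f (e (km, p)) := by
          rw [Fintype.sum_prod_type]
          rfl
      _ = ∑' km : Fin n × Fin n, ∑' p : ℕ × ℕ, f (e (km, p)) := (tsum_fintype _).symm
      _ = ∑' y : (Fin n × Fin n) × (ℕ × ℕ), f (e y) := (hsum'.tsum_prod' hinner).symm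
      _ = ∑' p, f p := e.tsum_eq f
  rw [main]
  unfold zeta2
  simp only [hf]
end

section
/- Let q be a real number with 0 < q < 1, let w₁ > 0 be real, and let u be a complex number with |u| < 1. Then for every integer n ≥ 0, the generating series of Euler–Barnes type Daehee q-Euler numbers evaluates in closed form: (1−u) · Σ_{m=0}^{∞} u^m · [w₁·m]_q^{n} = (1−u)·(1−q)^{−n} · Σ_{l=0}^{n} C(n,l)·(−1)^l / (1 − q^{w₁·l}·u), i.e. the n-th coefficient H_n(u^{−1} : q | w₁) of the series (1−u)·Σ_{m≥0} u^m·exp([w₁m]_q·t) equals (1−u)·(1−q)^{−n}·Σ_{l=0}^{n} C(n,l)·(−1)^l/(1 − q^{w₁l}·u). -/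
open Finset

/-- Closed form for the Euler–Barnes type Daehee q-Euler numbers:
`(1-u)·Σ_{m≥0} u^m·[w₁m]_q^n = (1-u)·(1-q)^{-n}·Σ_{l=0}^{n} C(n,l)·(-1)^l/(1 - q^{w₁l}·u)`. -/
theorem daehee_qEuler_number_closed_form (q w1 : ℝ) (hq0 : 0 < q) (hq1 : q < 1)
    (hw1 : 0 < w1) (u : ℂ) (hu : ‖u‖ < 1) (n : ℕ) :
    (1 - u) * ∑' m : ℕ, u ^ m * ((qn q (w1 * (m : ℝ)) ^ n : ℝ) : ℂ)
      = (1 - u) * (((1 - q : ℝ) : ℂ)⁻¹) ^ n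
        * ∑ l ∈ range (n + 1), (n.choose l : ℂ) * (-1) ^ l
            / (1 - ((q ^ (w1 * (l : ℝ)) : ℝ) : ℂ) * u) := by
  have hq0' : (0:ℝ) ≤ q := hq0.le
  set c : ℂ := (((1 - q : ℝ) : ℂ))⁻¹ with hc
  have hnorm : ∀ l : ℕ, ‖((q ^ (w1 * (l:ℝ)) : ℝ) : ℂ) * u‖ < 1 := by
    intro l
    rw [norm_mul, Complex.norm_real, Real.norm_eq_abs,
      abs_of_pos (Real.rpow_pos_of_pos hq0 _)]
    calc q ^ (w1 * (l:ℝ)) * ‖u‖ ≤ 1 * ‖u‖ := by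
          apply mul_le_mul_of_nonneg_right _ (norm_nonneg u)
          exact Real.rpow_le_one hq0' hq1.le (by positivity)
      _ = ‖u‖ := one_mul _
      _ < 1 := hu
  have hA : ∀ m l : ℕ, (q ^ (w1 * (m:ℝ))) ^ l = (q ^ (w1 * (l:ℝ))) ^ m := by
    intro m l
    rw [← Real.rpow_natCast (q ^ (w1*(m:ℝ))) l, ← Real.rpow_natCast (q ^ (w1*(l:ℝ))) m,
      ← Real.rpow_mul hq0', ← Real.rpow_mul hq0']
    ring_nf
  have hpt : ∀ m : ℕ, u ^ m * ((qn q (w1 * (m : ℝ)) ^ n : ℝ) : ℂ)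
      = ∑ l ∈ range (n+1), (n.choose l : ℂ) * (-1) ^ l * c ^ n *
          (((q ^ (w1 * (l:ℝ)) : ℝ) : ℂ) * u) ^ m := by
    intro m
    have hexp : ((1:ℂ) - ((q ^ (w1*(m:ℝ)):ℝ):ℂ))^n
        = ∑ l ∈ range (n+1), (n.choose l : ℂ) * (-1)^l * ((q ^ (w1*(m:ℝ)):ℝ):ℂ)^l := by
      rw [sub_eq_add_neg, add_comm, add_pow]
      refine Finset.sum_congr rfl fun l _ => by ring
    have hcast : ((qn q (w1 * (m : ℝ)) ^ n : ℝ) : ℂ)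
        = ((1:ℂ) - ((q ^ (w1*(m:ℝ)):ℝ):ℂ))^n * c ^ n := by
      unfold qn
      push_cast [hc]
      rw [div_pow, div_eq_mul_inv, ← inv_pow]
    rw [hcast, hexp, Finset.sum_mul, Finset.mul_sum]
    refine Finset.sum_congr rfl fun l _ => ?_
    have : (((q ^ (w1*(m:ℝ)):ℝ):ℂ))^l = (((q ^ (w1*(l:ℝ)):ℝ):ℂ))^m := by
      push_cast
      exact_mod_cast congrArg (Complex.ofReal) (hA m l)
    rw [this, mul_pow]
    ring
  have hsumm : ∀ l : ℕ, Summable (fun m : ℕ => (n.choose l : ℂ) * (-1) ^ l * c ^ n *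
      (((q ^ (w1 * (l:ℝ)) : ℝ) : ℂ) * u) ^ m) :=
    fun l => (summable_geometric_of_norm_lt_one (hnorm l)).mul_left _
  have hT : ∑' m : ℕ, u ^ m * ((qn q (w1 * (m : ℝ)) ^ n : ℝ) : ℂ)
      = ∑ l ∈ range (n+1), (n.choose l : ℂ) * (-1) ^ l * c ^ n *
          (1 - ((q ^ (w1 * (l:ℝ)) : ℝ) : ℂ) * u)⁻¹ := by
    rw [tsum_congr hpt, Summable.tsum_finsetSum (fun l _ => hsumm l)]
    refine Finset.sum_congr rfl fun l _ => ?_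
    rw [tsum_mul_left, tsum_geometric_of_norm_lt_one (hnorm l)]
  have hfin : ∑ l ∈ range (n+1), (n.choose l : ℂ) * (-1) ^ l * c ^ n *
      (1 - ((q ^ (w1 * (l:ℝ)) : ℝ) : ℂ) * u)⁻¹
      = c ^ n * ∑ l ∈ range (n + 1), (n.choose l : ℂ) * (-1) ^ l
          / (1 - ((q ^ (w1 * (l : ℝ)) : ℝ) : ℂ) * u) := by
    rw [Finset.mul_sum]
    exact Finset.sum_congr rfl fun l _ => by rw [div_eq_mul_inv]; ring
  rw [hT, hfin, mul_assoc]
end
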